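/- Let (Z_i)_{i∈Z} be i.i.d. regularly varying with index α ∈ (0,2), fix q ∈ N and real φ_0,...,φ_q satisfying 0 ≤ (Σ_{i=0}^s φ_i)/(Σ_{i=0}^q φ_i) ≤ 1 for all s = 0,...,q with β = Σ_{i=0}^q φ_i > 0, and let X_i = Σ_{j=0}^q φ_j Z_{i−j}. Define W_n(t) = a_n^{−1} ⋁_{i=1}^{⌊nt⌋} X_i and W_n^Z(t) = ⋁_{i=1}^{⌊nt⌋} (|Z_i|/a_n)(φ_+ 1_{{Z_i>0}} + φ_- 1_{{Z_i<0}}), where φ_+ = max{φ_j ∨ 0 : 0 ≤ j ≤ q}, φ_- = max{−φ_j ∨ 0 : 0 ≤ j ≤ q}. Then for every δ > 0, P(d_{M_2}(W_n^Z, W_n) > δ) → 0 as n → ∞. -/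

import Mathlib

open MeasureTheory Filter Topology Set ProbabilityTheory
open scoped ENNReal NNReal

noncomputable section

namespace LinProc

/-! ### Càdlàg paths on `[0,1]` and Skorohod `M₂` distances -/

/-- A function `f : ℝ → ℝ` is càdlàg on `[0,1]`: right-continuous on `[0,1)` and
with left limits on `(0,1]`. -/
def IsCadlag (f : ℝ → ℝ) : Prop :=
  (∀ t ∈ Set.Ico (0:ℝ) 1, Filter.Tendsto f (nhdsWithin t (Set.Ioi t)) (nhds (f t))) ∧
  (∀ t ∈ Set.Ioc (0:ℝ) 1, ∃ l : ℝ, Filter.Tendsto f (nhdsWithin t (Set.Iio t)) (nhds l))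

/-- The left limit `f(t-)`, with the convention `f(0-) = f 0`. -/
def llim (f : ℝ → ℝ) (t : ℝ) : ℝ :=
  if t ≤ 0 then f 0 else Function.leftLim f t

/-- The metric `d(a,b) = |a₁-b₁| ∨ |a₂-b₂|` on `ℝ²`. -/
def dRect (a b : ℝ × ℝ) : ℝ := max |a.1 - b.1| |a.2 - b.2|

/-- The completed (thin) graph of `f` over `[0,1]`:
all points `(t, z)` with `t ∈ [0,1]` and `z` on the segment between `f(t-)` and `f(t)`. -/
def completedGraph (f : ℝ → ℝ) : Set (ℝ × ℝ) :=
  {p | p.1 ∈ Set.Icc (0:ℝ) 1 ∧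
    ∃ lam ∈ Set.Icc (0:ℝ) 1, p.2 = lam * llim f p.1 + (1 - lam) * f p.1}

/-- One-sided Hausdorff gap between completed graphs. -/
def graphGap (f g : ℝ → ℝ) : ℝ :=
  sSup ((fun a => sInf (dRect a '' completedGraph g)) '' completedGraph f)

/-- The Skorohod `M₂` metric on `D([0,1],ℝ)`: the Hausdorff distance (w.r.t. `dRect`)
between the completed graphs. -/
def dM2 (f g : ℝ → ℝ) : ℝ := max (graphGap f g) (graphGap g f)

/-- The metric `d_p` inducing the weak `M₂` (product) topology on `D([0,1],ℝ²)`,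
where an element of `D([0,1],ℝ²)` is recorded as a pair of real càdlàg functions. -/
def dProd (x y : (ℝ → ℝ) × (ℝ → ℝ)) : ℝ := max (dM2 x.1 y.1) (dM2 x.2 y.2)

/-! ### Convergence in distribution w.r.t. a distance function -/

/-- Convergence in distribution, along a filter `l`, of random elements of a space `S`
equipped with a distance function `d` : tested against all bounded functions `F : S → ℝ`
that are continuous with respect to `d` (measurability of the compositions is required
so that the integrals are meaningful). -/
def TendstoInDistr {ι Ω Ω' S : Type*} [MeasurableSpace Ω] [MeasurableSpace Ω']
    (l : Filter ι) (P : Measure Ω) (P' : Measure Ω') (d : S → S → ℝ)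
    (X : ι → Ω → S) (Y : Ω' → S) : Prop :=
  ∀ F : S → ℝ, (∃ C : ℝ, ∀ s, |F s| ≤ C) →
    (∀ s : S, ∀ ε > (0:ℝ), ∃ δ > (0:ℝ), ∀ s', d s s' < δ → |F s' - F s| < ε) →
    (∀ i, AEStronglyMeasurable (fun ω => F (X i ω)) P) →
    AEStronglyMeasurable (fun ω => F (Y ω)) P' →
    Filter.Tendsto (fun i => ∫ ω, F (X i ω) ∂P) l (𝓝 (∫ ω, F (Y ω) ∂P'))

/-! ### Regular variation -/

/-- `L` is slowly varying at `∞`. -/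
def SlowlyVarying (L : ℝ → ℝ) : Prop :=
  (∀ᶠ x in atTop, 0 < L x) ∧
    ∀ c > (0:ℝ), Filter.Tendsto (fun x => L (c * x) / L x) atTop (𝓝 1)

/-- `Z` has a regularly varying (two-sided) tail with index `α`:
`P(|Z| > x) = x^{-α} L(x)` for a slowly varying `L`. -/
def RegVarAbs {Ω : Type*} [MeasurableSpace Ω] (P : Measure Ω) (Z : Ω → ℝ) (α : ℝ) : Prop :=
  0 < α ∧ ∃ L : ℝ → ℝ, SlowlyVarying L ∧
    ∀ x > (0:ℝ), (P {ω | x < |Z ω|}).toReal = x ^ (-α) * L x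

/-- `Z` is regularly varying with index `α` and tail balance parameters `p`, `r`. -/
def RegVar {Ω : Type*} [MeasurableSpace Ω] (P : Measure Ω) (Z : Ω → ℝ)
    (α p r : ℝ) : Prop :=
  RegVarAbs P Z α ∧
    Filter.Tendsto
      (fun x : ℝ => (P {ω | x < Z ω}).toReal / (P {ω | x < |Z ω|}).toReal)
      atTop (𝓝 p) ∧
    Filter.Tendsto
      (fun x : ℝ => (P {ω | Z ω ≤ -x}).toReal / (P {ω | x < |Z ω|}).toReal)
      atTop (𝓝 r)

/-- The normalizing sequence `(aₙ)`: positive with `n P(|Z| > aₙ) → 1`. -/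
def NormSeq {Ω : Type*} [MeasurableSpace Ω] (P : Measure Ω) (Z : Ω → ℝ) (a : ℕ → ℝ) : Prop :=
  (∀ n, 0 < a n) ∧
    Filter.Tendsto (fun n : ℕ => (n : ℝ) * (P {ω | a n < |Z ω|}).toReal) atTop (𝓝 1)

/-- An i.i.d. family of real random variables. -/
def IID {Ω ι : Type*} [MeasurableSpace Ω] (P : Measure Ω) (Z : ι → Ω → ℝ) : Prop :=
  (∀ i, Measurable (Z i)) ∧
    ProbabilityTheory.iIndepFun (m := fun _ => Real.measurableSpace) Z P ∧
    ∀ i j, P.map (Z i) = P.map (Z j)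

/-- `Z` is symmetric: `Z` and `-Z` have the same law. -/
def Symmetric' {Ω : Type*} [MeasurableSpace Ω] (P : Measure Ω) (Z : Ω → ℝ) : Prop :=
  P.map Z = P.map (fun ω => -(Z ω))

/-! ### The limit measures -/

/-- The Lévy measure `μ(dx) = (p 1_{(0,∞)}(x) + r 1_{(-∞,0)}(x)) α |x|^{-α-1} dx`. -/
def levyMeasure (α p r : ℝ) : Measure ℝ :=
  volume.withDensity fun x =>
    ENNReal.ofReal ((if 0 < x then p else if x < 0 then r else 0) * α * |x| ^ (-α - 1))

/-- The exponent measure `ν(dx) = (φ₊^α p + φ₋^α r) α x^{-α-1} 1_{(0,∞)}(x) dx`. -/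
def extremalMeasure (α p r φp φm : ℝ) : Measure ℝ :=
  volume.withDensity fun x =>
    ENNReal.ofReal (if 0 < x then (φp ^ α * p + φm ^ α * r) * α * x ^ (-α - 1) else 0)

/-! ### Lévy processes and extremal processes on `[0,1]` -/

/-- `V` is a Lévy process on `[0,1]` with characteristic triple `(0, ν, b)`. -/
structure IsLevy {Ω : Type*} [MeasurableSpace Ω] (P : Measure Ω) (V : Ω → ℝ → ℝ)
    (ν : Measure ℝ) (b : ℝ) : Prop where
  meas : ∀ t, Measurable fun ω => V ω t
  start : ∀ᵐ ω ∂P, V ω 0 = 0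
  cadlag : ∀ᵐ ω ∂P, IsCadlag (V ω)
  indepIncr : ∀ (n : ℕ) (t : Fin (n+1) → ℝ), Monotone t →
    (∀ i, t i ∈ Set.Icc (0:ℝ) 1) →
    ProbabilityTheory.iIndepFun (m := fun _ => Real.measurableSpace)
      (fun i : Fin n => fun ω => V ω (t i.succ) - V ω (t i.castSucc)) P
  statIncr : ∀ s t : ℝ, 0 ≤ s → s ≤ t → t ≤ 1 →
    P.map (fun ω => V ω t - V ω s) = P.map (fun ω => V ω (t - s))
  charFun : ∀ t ∈ Set.Icc (0:ℝ) 1, ∀ z : ℝ,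
    ∫ ω, Complex.exp (Complex.I * z * V ω t) ∂P =
      Complex.exp (t * (Complex.I * b * z +
        ∫ x : ℝ, (Complex.exp (Complex.I * z * x) - 1 -
          Complex.I * z * x * Set.indicator (Set.Icc (-1:ℝ) 1) (fun _ => (1:ℂ)) x) ∂ν))

/-- `W` is an extremal process on `[0,1]` with exponent measure `ν`: its finite-dimensional
distributions are `P(W(t₁) ≤ x₁, …, W(t_k) ≤ x_k)
 = ∏ᵢ exp(-(tᵢ - tᵢ₋₁) ν(minⱼ≥ᵢ xⱼ, ∞))` for `0 < t₁ < ⋯ < t_k ≤ 1` and `xᵢ > 0`. -/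
structure IsExtremal {Ω : Type*} [MeasurableSpace Ω] (P : Measure Ω) (W : Ω → ℝ → ℝ)
    (ν : Measure ℝ) : Prop where
  meas : ∀ t, Measurable fun ω => W ω t
  fdd : ∀ (k : ℕ) (t x : Fin (k+1) → ℝ), StrictMono t → 0 < t 0 → t (Fin.last k) ≤ 1 →
    (∀ i, 0 < x i) →
    P {ω | ∀ i, W ω (t i) ≤ x i} =
      ENNReal.ofReal (Real.exp (-(∑ i : Fin (k+1),
        (t i - if h : i = 0 then 0 else t (Fin.castSucc (i.pred h))) *
          (ν (Set.Ioi (sInf (x '' {j | i ≤ j})))).toReal)))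

/-! ### Poisson point processes on `[0,1] × (ℝ \ {0})` -/

/-- The number of points of the family `pts` lying in `A` (in `ℝ≥0∞`). -/
def ptCount (pts : ℕ → ℝ × ℝ) (A : Set (ℝ × ℝ)) : ℝ≥0∞ :=
  ∑' i, A.indicator (fun _ => (1:ℝ≥0∞)) (pts i)

/-- `pts` is a Poisson point process with (σ-finite, atomless on single points) intensity
measure `m`: counts of disjoint sets are independent, and the count of any set of finite
intensity is Poisson distributed. -/
def IsPoissonPP {Ω : Type*} [MeasurableSpace Ω] (P : Measure Ω)
    (pts : Ω → ℕ → ℝ × ℝ) (m : Measure (ℝ × ℝ)) : Prop :=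
  (∀ i, Measurable fun ω => pts ω i) ∧
  (∀ A : Set (ℝ × ℝ), MeasurableSet A → m A ≠ ∞ → ∀ k : ℕ,
    P {ω | ptCount (pts ω) A = k} =
      ENNReal.ofReal (Real.exp (-(m A).toReal) * (m A).toReal ^ k / (Nat.factorial k))) ∧
  (∀ (n : ℕ) (A : Fin n → Set (ℝ × ℝ)), (∀ i, MeasurableSet (A i)) →
    Pairwise (Function.onFun Disjoint A) →
    ProbabilityTheory.iIndepFun (m := fun _ => inferInstance)
      (fun i ω => ptCount (pts ω) (A i)) P)

/-- The weight `|x| (φ₊ 1_{x>0} + φ₋ 1_{x<0})`. -/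
def wt (φp φm : ℝ) (x : ℝ) : ℝ := |x| * (if 0 < x then φp else if x < 0 then φm else 0)

/-- First component of the sum–maximum functional of a point family:
`β Σ_{tᵢ ≤ t} xᵢ 1_{u < |xᵢ|}`. -/
def ppSum (β u : ℝ) (pts : ℕ → ℝ × ℝ) (t : ℝ) : ℝ :=
  β * ∑' i, if (pts i).1 ≤ t ∧ u < |(pts i).2| then (pts i).2 else 0

/-- Second component of the sum–maximum functional:
`⋁_{tᵢ ≤ t} |xᵢ| (φ₊ 1_{xᵢ>0} + φ₋ 1_{xᵢ<0})`, with `sup ∅ = 0`. -/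
def ppMax (φp φm : ℝ) (pts : ℕ → ℝ × ℝ) (t : ℝ) : ℝ :=
  sSup (insert 0 {v | ∃ i, (pts i).1 ≤ t ∧ v = wt φp φm (pts i).2})

/-! ### Partial sum and partial maxima processes -/

/-- Partial-sum process `t ↦ (Σ_{i=1}^{⌊nt⌋} Y_i - ⌊nt⌋ b) / a`. -/
def sumProc (a b : ℝ) (Y : ℕ → ℝ) (n : ℕ) (t : ℝ) : ℝ :=
  ((∑ i ∈ Finset.range ⌊(n:ℝ) * t⌋₊, Y (i+1)) - (⌊(n:ℝ) * t⌋₊ : ℝ) * b) / a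

/-- Partial-maxima process `t ↦ (⋁_{i=1}^{⌊nt⌋} Y_i) / a` (with value `0` for `⌊nt⌋ = 0`). -/
def maxProc (a : ℝ) (Y : ℕ → ℝ) (n : ℕ) (t : ℝ) : ℝ :=
  if h : ⌊(n:ℝ) * t⌋₊ = 0 then 0 else
    ((Finset.range ⌊(n:ℝ) * t⌋₊).sup' (Finset.nonempty_range_iff.mpr h)
      (fun i => Y (i+1))) / a

/-- `φ₊ = max{φⱼ ∨ 0 : 0 ≤ j ≤ q}` for finitely many coefficients. -/
def phiPlusFin (q : ℕ) (φ : ℕ → ℝ) : ℝ :=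
  (Finset.range (q+1)).sup' (Finset.nonempty_range_iff.mpr (Nat.succ_ne_zero q))
    fun j => max (φ j) 0

/-- `φ₋ = max{-φⱼ ∨ 0 : 0 ≤ j ≤ q}` for finitely many coefficients. -/
def phiMinusFin (q : ℕ) (φ : ℕ → ℝ) : ℝ :=
  (Finset.range (q+1)).sup' (Finset.nonempty_range_iff.mpr (Nat.succ_ne_zero q))
    fun j => max (-φ j) 0

/-- `φ₊ = sup{φⱼ ∨ 0 : j ≥ 0}`. -/
def phiPlus (φ : ℕ → ℝ) : ℝ := ⨆ j : ℕ, max (φ j) 0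

/-- `φ₋ = sup{-φⱼ ∨ 0 : j ≥ 0}`. -/
def phiMinus (φ : ℕ → ℝ) : ℝ := ⨆ j : ℕ, max (-φ j) 0



/-! ### Radon point measures on `[0,1] × E`, `E = [-∞,∞] \ {0}` -/

/-- The point measure `Σᵢ δ_{pᵢ}` associated with a family of optional points in
`[0,1] × [-∞,∞]` (unused indices carry `none`). -/
def pmMeasure (pts : ℕ → Option (ℝ × EReal)) : Measure (ℝ × EReal) :=
  Measure.sum fun i => (pts i).elim 0 fun p => Measure.dirac p

/-- The points of `pts` lie in `[0,1] × E`, `E = [-∞,∞] \ {0}`. -/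
def pmSupported (pts : ℕ → Option (ℝ × EReal)) : Prop :=
  ∀ i p, pts i = some p → p.1 ∈ Set.Icc (0:ℝ) 1 ∧ p.2 ≠ 0

/-- Radon property: only finitely many points outside every neighbourhood `(-δ,δ)` of `0`. -/
def pmRadon (pts : ℕ → Option (ℝ × EReal)) : Prop :=
  ∀ δ : ℝ, 0 < δ →
    {i : ℕ | ∃ p, pts i = some p ∧ (p.2 ≤ -(δ:EReal) ∨ (δ:EReal) ≤ p.2)}.Finite

/-- Vague convergence of the point measures on `[0,1] × E`: convergence of integrals of
continuous functions vanishing on a neighbourhood of `{x = 0}` (such functions have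
compactly contained support in `[0,1] × E`). -/
def VagueTendsto (pm : ℕ → (ℕ → Option (ℝ × EReal))) (pm0 : ℕ → Option (ℝ × EReal)) : Prop :=
  ∀ f : ℝ × EReal → ℝ, Continuous f →
    (∃ δ : ℝ, 0 < δ ∧ ∀ p : ℝ × EReal, -(δ:EReal) < p.2 → p.2 < (δ:EReal) → f p = 0) →
    Filter.Tendsto (fun n => ∫ p, f p ∂(pmMeasure (pm n))) atTop
      (𝓝 (∫ p, f p ∂(pmMeasure pm0)))

/-- The weight `|x| (φ₊ 1_{x>0} + φ₋ 1_{x<0})` for `x ∈ [-∞,∞]` (real value; by convention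
the weight of an infinite point is `0`). -/
def wtE (φp φm : ℝ) (x : EReal) : ℝ :=
  (if 0 < x then φp else if x < 0 then φm else 0) * |x.toReal|

/-- `Φ^{(u)}` first component: `β Σ_{tᵢ ≤ t} xᵢ 1_{u < |xᵢ| < ∞}`. -/
def phiSumE (β u : ℝ) (pts : ℕ → Option (ℝ × EReal)) (t : ℝ) : ℝ :=
  β * ∑' i, (pts i).elim 0 fun p =>
    if p.1 ≤ t ∧ ((u:EReal) < p.2 ∨ p.2 < -(u:EReal)) ∧ p.2 ≠ ⊤ ∧ p.2 ≠ ⊥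
    then p.2.toReal else 0

/-- `Φ^{(u)}` second component: `⋁_{tᵢ ≤ t} |xᵢ| (φ₊ 1_{xᵢ>0} + φ₋ 1_{xᵢ<0})`, `sup ∅ = 0`. -/
def phiMaxE (φp φm : ℝ) (pts : ℕ → Option (ℝ × EReal)) (t : ℝ) : ℝ :=
  sSup (insert 0 {v | ∃ i p, pts i = some p ∧ p.1 ≤ t ∧ v = wtE φp φm p.2})

/-! ### The `M₁` oscillation function and the metric `d_{M₁}^*` -/

/-- The oscillation `ω(x,δ) = sup_{t} sup_{0∨(t-δ) ≤ t₁<t₂<t₃ ≤ (t+δ)∧1}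
‖x(t₂) - [x(t₁),x(t₃)]‖`. -/
def osc (x : ℝ → ℝ) (δ : ℝ) : ℝ :=
  sSup (insert 0 {v | ∃ t ∈ Set.Icc (0:ℝ) 1, ∃ t₁ t₂ t₃ : ℝ,
    max 0 (t - δ) ≤ t₁ ∧ t₁ < t₂ ∧ t₂ < t₃ ∧ t₃ ≤ min (t + δ) 1 ∧
    v = Metric.infDist (x t₂) (Set.uIcc (x t₁) (x t₃))})

/-- `ω̂(x,z) = ω(x, e^z)` for `z < 0` and `ω(x,1)` for `z ≥ 0`. -/
def oscHat (x : ℝ → ℝ) (z : ℝ) : ℝ :=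
  if z < 0 then osc x (Real.exp z) else osc x 1

/-- The Lévy metric `λ(F₁,F₂) = inf{ε > 0 : F₂(y-ε) - ε ≤ F₁(y) ≤ F₂(y+ε) + ε ∀y}`. -/
def levyMetric (F G : ℝ → ℝ) : ℝ :=
  sInf {ε : ℝ | 0 < ε ∧ ∀ y : ℝ, G (y - ε) - ε ≤ F y ∧ F y ≤ G (y + ε) + ε}


/-- The complete metric `d_{M₁}^*(x₁,x₂) = d_{M₂}(x₁,x₂) + λ(ω̂(x₁,·), ω̂(x₂,·))`,
topologically equivalent to the Skorohod `M₁` metric. -/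
def dM1star (f g : ℝ → ℝ) : ℝ := dM2 f g + levyMetric (oscHat f) (oscHat g)

/-- The metric `d_p^*` : `M₂` on the first coordinate, `M₁` on the second. -/
def dProdStar (x y : (ℝ → ℝ) × (ℝ → ℝ)) : ℝ := max (dM2 x.1 y.1) (dM1star x.2 y.2)


/-! ### Auxiliary lemmas for Statement 10 -/

section Aux10

lemma exists_lam_of_mem_uIcc {a b v : ℝ} (h : v ∈ Set.uIcc a b) :
    ∃ lam ∈ Set.Icc (0:ℝ) 1, v = lam * a + (1 - lam) * b := by
  rcases eq_or_ne a b with rfl | hab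
  · refine ⟨0, by norm_num, ?_⟩
    simp only [Set.uIcc_self, Set.mem_singleton_iff] at h
    simp [h]
  · refine ⟨(b - v) / (b - a), ?_, ?_⟩
    · rw [Set.mem_uIcc] at h
      constructor
      · rcases h with h | h
        · apply div_nonneg (by linarith [h.2]) (by rcases lt_or_gt_of_ne hab with h'|h' <;> nlinarith [h.1, h.2])
        · rcases lt_trichotomy a b with h'|h'|h'
          · nlinarith [h.1, h.2]
          · exact absurd h' hab
          · apply div_nonneg_of_nonpos (by linarith [h.2]) (by linarith)
      · rcases lt_trichotomy a b with h'|h'|h'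
        · rw [div_le_one (by linarith)]
          rcases h with h | h
          · linarith [h.1]
          · linarith [h.1, h.2]
        · exact absurd h' hab
        · rw [div_le_one_of_neg (by linarith)]
          rcases h with h | h
          · linarith [h.1, h.2]
          · linarith [h.1]
    · have hba : b - a ≠ 0 := sub_ne_zero.2 (Ne.symm hab)
      field_simp
      ring
  
lemma mem_uIcc_of_lam {a b v lam : ℝ} (hlam : lam ∈ Set.Icc (0:ℝ) 1)
    (hv : v = lam * a + (1 - lam) * b) : v ∈ Set.uIcc a b := by
  rw [Set.mem_uIcc]
  obtain ⟨h0, h1⟩ := hlam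
  rcases le_total a b with h | h
  · left; constructor <;> nlinarith
  · right; constructor <;> nlinarith

variable {n : ℕ} {F : ℕ → ℝ}

lemma step_apply_nat (hn : 1 ≤ n) (j : ℕ) :
    F ⌊(n:ℝ) * ((j:ℝ)/(n:ℝ))⌋₊ = F j := by
  have hn0 : (n:ℝ) ≠ 0 := by positivity
  rw [mul_div_cancel₀ _ hn0, Nat.floor_natCast]

lemma floor_mul_le (hn : 1 ≤ n) {t : ℝ} (ht : t ≤ 1) : ⌊(n:ℝ) * t⌋₊ ≤ n := by
  have hn' : (0:ℝ) ≤ n := by positivity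
  have : (n:ℝ) * t ≤ (n:ℝ) := by nlinarith
  calc ⌊(n:ℝ) * t⌋₊ ≤ ⌊(n:ℝ)⌋₊ := Nat.floor_le_floor this
    _ = n := Nat.floor_natCast n

lemma leftLim_step_of_lt (hn : 1 ≤ n) {t : ℝ} (ht : 0 < t)
    (hk : ((⌊(n:ℝ)*t⌋₊ : ℝ)) < (n:ℝ)*t) :
    Function.leftLim (fun s => F ⌊(n:ℝ)*s⌋₊) t = F ⌊(n:ℝ)*t⌋₊ := by
  have hnpos : (0:ℝ) < n := by positivity
  set k := ⌊(n:ℝ)*t⌋₊ with hkdef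
  have hdiv : (k:ℝ)/n < t := (div_lt_iff₀' hnpos).2 hk
  apply leftLim_eq_of_tendsto
    (h := nhdsLT_neBot t)
  apply Filter.Tendsto.congr' _ tendsto_const_nhds
  filter_upwards [Ioo_mem_nhdsLT hdiv] with s hs
  have h1 : (k:ℝ) < (n:ℝ)*s := (div_lt_iff₀' hnpos).1 hs.1
  have h2 : (n:ℝ)*s < k + 1 := by
    calc (n:ℝ)*s < (n:ℝ)*t := by nlinarith [hs.2]
      _ < k + 1 := by
        have := Nat.lt_floor_add_one ((n:ℝ)*t); push_cast at this ⊢; linarith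
  have : ⌊(n:ℝ)*s⌋₊ = k := by
    rw [Nat.floor_eq_iff (le_trans (Nat.cast_nonneg k) (le_of_lt h1))]
    exact ⟨le_of_lt h1, by push_cast; linarith⟩
  simp [this]

lemma leftLim_step_of_int (hn : 1 ≤ n) {t : ℝ} {k : ℕ} (hk1 : 1 ≤ k)
    (ht : (n:ℝ)*t = k) :
    Function.leftLim (fun s => F ⌊(n:ℝ)*s⌋₊) t = F (k-1) := by
  have hnpos : (0:ℝ) < n := by positivity
  have hkcast : ((k-1 : ℕ):ℝ) = (k:ℝ) - 1 := by
    push_cast [Nat.cast_sub hk1]; ring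
  have hdiv : ((k-1:ℕ):ℝ)/n < t := by
    rw [div_lt_iff₀' hnpos, ht, hkcast]; linarith
  apply leftLim_eq_of_tendsto
    (h := nhdsLT_neBot t)
  apply Filter.Tendsto.congr' _ tendsto_const_nhds
  filter_upwards [Ioo_mem_nhdsLT hdiv] with s hs
  have h1 : ((k-1:ℕ):ℝ) < (n:ℝ)*s := (div_lt_iff₀' hnpos).1 hs.1
  have h2 : (n:ℝ)*s < (k-1:ℕ) + 1 := by
    rw [hkcast]
    have : (n:ℝ)*s < (n:ℝ)*t := by nlinarith [hs.2]
    rw [ht] at this; linarith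
  have : ⌊(n:ℝ)*s⌋₊ = k - 1 := by
    rw [Nat.floor_eq_iff (le_of_lt (lt_of_le_of_lt (by positivity) h1))]
    exact ⟨le_of_lt h1, h2⟩
  simp [this]

lemma mem_CG_apply (hn : 1 ≤ n) {t : ℝ} (ht : t ∈ Set.Icc (0:ℝ) 1) :
    (t, F ⌊(n:ℝ)*t⌋₊) ∈ completedGraph (fun s => F ⌊(n:ℝ)*s⌋₊) := by
  exact ⟨ht, 0, by norm_num, by norm_num⟩

lemma mem_CG_seg (hn : 1 ≤ n) {j : ℕ} (hj1 : 1 ≤ j) (hjn : j ≤ n) {v : ℝ}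
    (hv : v ∈ Set.uIcc (F (j-1)) (F j)) :
    ((j:ℝ)/(n:ℝ), v) ∈ completedGraph (fun s => F ⌊(n:ℝ)*s⌋₊) := by
  have hnpos : (0:ℝ) < n := by positivity
  have htpos : 0 < (j:ℝ)/(n:ℝ) := by positivity
  have ht1 : (j:ℝ)/(n:ℝ) ≤ 1 := by
    rw [div_le_one hnpos]; exact_mod_cast hjn
  have hnt : (n:ℝ) * ((j:ℝ)/(n:ℝ)) = (j:ℝ) := by field_simp
  have hll : llim (fun s => F ⌊(n:ℝ)*s⌋₊) ((j:ℝ)/(n:ℝ)) = F (j-1) := by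
    rw [llim, if_neg (not_le.2 htpos)]
    exact leftLim_step_of_int hn hj1 hnt
  obtain ⟨lam, hlam, hveq⟩ := exists_lam_of_mem_uIcc hv
  refine ⟨⟨le_of_lt htpos, ht1⟩, lam, hlam, ?_⟩
  simp only [hll, hnt, Nat.floor_natCast]
  exact hveq

lemma cover_lemma (H : ℕ → ℝ) (j0 j1 : ℕ) (hj : j0 ≤ j1)
    (hmono : ∀ i i', j0 ≤ i → i ≤ i' → i' ≤ j1 → H i ≤ H i')
    {v : ℝ} (h1 : H j0 ≤ v) (h2 : v ≤ H j1) :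
    v = H j0 ∨ ∃ j, j0 < j ∧ j ≤ j1 ∧ H (j-1) ≤ v ∧ v ≤ H j := by
  by_cases hv0 : v ≤ H j0
  · exact Or.inl (le_antisymm hv0 h1)
  push_neg at hv0
  right
  set S := (Finset.Icc (j0+1) j1).filter (fun j => v ≤ H j) with hS
  have hSne : S.Nonempty := by
    refine ⟨j1, ?_⟩
    rw [hS, Finset.mem_filter, Finset.mem_Icc]
    have : j0 ≠ j1 := by rintro rfl; linarith
    exact ⟨⟨Nat.succ_le_of_lt (lt_of_le_of_ne hj this), le_refl _⟩, h2⟩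
  set j := S.min' hSne with hj'
  have hjS : j ∈ S := Finset.min'_mem _ _
  rw [hS, Finset.mem_filter, Finset.mem_Icc] at hjS
  have hjpos : 0 < j := lt_of_lt_of_le (Nat.succ_pos j0) hjS.1.1
  refine ⟨j, lt_of_lt_of_le (Nat.lt_succ_self j0) hjS.1.1, hjS.1.2, ?_, hjS.2⟩
  rcases Nat.lt_or_ge (j-1) (j0+1) with hc | hc
  · have h0 : j - 1 ≤ j0 := Nat.lt_succ_iff.1 hc
    have := hmono (j-1) j0 (by omega) h0 hj
    linarith
  · have hlt : j - 1 < j := Nat.sub_lt hjpos one_pos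
    have hnotS : j - 1 ∉ S := fun hmem => absurd (Finset.min'_le _ _ hmem) (not_le.2 hlt)
    rw [hS, Finset.mem_filter, Finset.mem_Icc] at hnotS
    push_neg at hnotS
    exact le_of_lt (hnotS ⟨hc, le_trans (Nat.sub_le _ _) hjS.1.2⟩)


lemma uIcc_bounds {a b z : ℝ} (h : z ∈ Set.uIcc a b) : min a b ≤ z ∧ z ≤ max a b := by
  rcases Set.mem_uIcc.1 h with ⟨h1,h2⟩|⟨h1,h2⟩
  · exact ⟨le_trans (min_le_left _ _) h1, le_trans h2 (le_max_right _ _)⟩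
  · exact ⟨le_trans (min_le_right _ _) h1, le_trans h2 (le_max_left _ _)⟩

lemma dRect_nonneg (a b : ℝ × ℝ) : 0 ≤ dRect a b :=
  le_max_of_le_left (abs_nonneg _)

lemma mem_CG_nat (hn : 1 ≤ n) {j : ℕ} (hjn : j ≤ n) :
    ((j:ℝ)/(n:ℝ), F j) ∈ completedGraph (fun s => F ⌊(n:ℝ)*s⌋₊) := by
  have hnpos : (0:ℝ) < n := by positivity
  have ht : (j:ℝ)/(n:ℝ) ∈ Set.Icc (0:ℝ) 1 :=
    ⟨by positivity, by rw [div_le_one hnpos]; exact_mod_cast hjn⟩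
  have h2 := mem_CG_apply (F := F) hn ht
  have hnt : (n:ℝ) * ((j:ℝ)/(n:ℝ)) = (j:ℝ) := by field_simp
  rw [hnt, Nat.floor_natCast] at h2
  exact h2

lemma exists_close (hn : 1 ≤ n) (q' : ℕ) (B : ℕ → ℝ) (hB0 : B 0 = 0)
    (hmono : ∀ i i', 1 ≤ i → i ≤ i' → i' ≤ n → B i ≤ B i')
    {t z C : ℝ} (hC : 0 ≤ C) (ht : t ∈ Set.Icc (0:ℝ) 1)
    (jl jr : ℕ) (hjrn : jr ≤ n) (hjljr : jl ≤ jr)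
    (hkjr : ⌊(n:ℝ)*t⌋₊ ≤ jr)
    (htl : t - ((q':ℝ)+2)/n ≤ (jl:ℝ)/n)
    (htr : (jr:ℝ)/n ≤ t + ((q':ℝ)+2)/n)
    (hz : -C ≤ z)
    (hlow : B jl ≤ z + C) (hhigh : z ≤ B jr + C) :
    ∃ b ∈ completedGraph (fun s => B ⌊(n:ℝ)*s⌋₊),
      dRect (t, z) b ≤ max C (((q':ℝ)+2)/n) := by
  have hnpos : (0:ℝ) < n := by positivity
  have hq2 : (0:ℝ) ≤ ((q':ℝ)+2)/n := by positivity
  have habs : ∀ j : ℕ, jl ≤ j → j ≤ jr → |t - (j:ℝ)/n| ≤ ((q':ℝ)+2)/n := by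
    intro j h1 h2
    have e1 : (jl:ℝ)/n ≤ (j:ℝ)/n :=
      (div_le_div_iff_of_pos_right hnpos).2 (Nat.cast_le.2 h1)
    have e2 : (j:ℝ)/n ≤ (jr:ℝ)/n :=
      (div_le_div_iff_of_pos_right hnpos).2 (Nat.cast_le.2 h2)
    rw [abs_le]
    constructor <;> linarith
  have hdle : ∀ {t' z' : ℝ}, |t - t'| ≤ ((q':ℝ)+2)/n → |z - z'| ≤ C →
      dRect (t, z) (t', z') ≤ max C (((q':ℝ)+2)/n) := by
    intro t' z' h1 h2
    exact max_le (le_max_of_le_right h1) (le_max_of_le_left h2)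
  rcases Nat.eq_zero_or_pos jr with hjr0 | hjr1
  · -- jr = 0 : match the point (t, 0)
    have hk0 : ⌊(n:ℝ)*t⌋₊ = 0 := le_antisymm (hjr0 ▸ hkjr) (Nat.zero_le _)
    refine ⟨(t, B ⌊(n:ℝ)*t⌋₊), mem_CG_apply hn ht, ?_⟩
    rw [hk0, hB0]
    apply hdle (by simpa using hq2)
    subst hjr0
    rw [hB0] at hhigh
    rw [abs_le]
    constructor <;> linarith
  -- jr ≥ 1
  set jlm := max jl 1 with hjlm
  have hjlm1 : 1 ≤ jlm := le_max_right _ _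
  have hjlmr : jlm ≤ jr := max_le hjljr hjr1
  rcases lt_trichotomy z (B jlm) with hcase | hcase | hcase
  · -- z < B jlm
    rcases Nat.eq_zero_or_pos jl with hjl0 | hjl1
    · -- jl = 0
      have hjlm1' : jlm = 1 := by simp [hjlm, hjl0]
      rcases le_or_gt 0 z with hz0 | hz0
      · -- 0 ≤ z < B 1 : point (1/n, z)
        have hmem : (((1:ℕ):ℝ)/(n:ℝ), z) ∈ completedGraph (fun s => B ⌊(n:ℝ)*s⌋₊) := by
          apply mem_CG_seg hn (le_refl 1) hn
          rw [Set.mem_uIcc]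
          left
          constructor
          · simpa [hB0] using hz0
          · rw [hjlm1'] at hcase; exact le_of_lt hcase
        refine ⟨_, hmem, hdle (habs 1 (by omega) hjr1) (by simpa using hC)⟩
      · -- z < 0 : point (0, 0)
        have hmem : (((0:ℕ):ℝ)/(n:ℝ), B 0) ∈ completedGraph (fun s => B ⌊(n:ℝ)*s⌋₊) :=
          mem_CG_nat hn (Nat.zero_le n)
        refine ⟨_, hmem, hdle ?_ ?_⟩
        · have h0 : ((0:ℕ):ℝ)/(n:ℝ) = (jl:ℝ)/n := by rw [hjl0]
          rw [h0, abs_of_nonneg ?_]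
          · linarith
          · have : (0:ℝ) ≤ (jl:ℝ)/n := by positivity
            rw [hjl0] at *
            simp only [Nat.cast_zero, zero_div] at *
            linarith [ht.1]
        · rw [hB0, abs_of_nonpos (by linarith)]
          linarith
    · -- jl ≥ 1 : point (jl/n, B jl)
      have hjlm' : jlm = jl := max_eq_left hjl1
      refine ⟨_, mem_CG_nat hn (le_trans hjljr hjrn), hdle (habs jl (le_refl _) hjljr) ?_⟩
      rw [hjlm'] at hcase
      rw [abs_of_nonpos (by linarith)]
      linarith
  · -- z = B jlm : point (jlm/n, B jlm)
    refine ⟨_, mem_CG_nat hn (le_trans hjlmr hjrn),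
      hdle (habs jlm (le_max_left _ _) hjlmr) (by rw [hcase]; simpa using hC)⟩
  · -- B jlm < z
    rcases lt_or_ge (B jr) z with hbr | hbr
    · -- z > B jr : point (jr/n, B jr)
      refine ⟨_, mem_CG_nat hn hjrn, hdle (habs jr hjljr (le_refl _)) ?_⟩
      rw [abs_of_nonneg (by linarith)]
      linarith
    · -- B jlm < z ≤ B jr
      have hcov := cover_lemma B jlm jr hjlmr
        (fun i i' h1 h2 h3 => hmono i i' (le_trans hjlm1 h1) h2 (le_trans h3 hjrn))
        (le_of_lt hcase) hbr
      rcases hcov with heq | ⟨j, hj1, hj2, hj3, hj4⟩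
      · exact absurd heq (ne_of_gt hcase)
      · have hmem : ((j:ℝ)/(n:ℝ), z) ∈ completedGraph (fun s => B ⌊(n:ℝ)*s⌋₊) := by
          apply mem_CG_seg hn (le_trans hjlm1 (le_of_lt hj1)) (le_trans hj2 hjrn)
          rw [Set.mem_uIcc]; left; exact ⟨hj3, hj4⟩
        exact ⟨_, hmem,
          hdle (habs j (le_trans (le_max_left _ _) (le_of_lt hj1)) hj2) (by simpa using hC)⟩

lemma graphGap_le_aux (f g : ℝ → ℝ) (D : ℝ) (hD : 0 ≤ D)
    (h : ∀ p ∈ completedGraph f, ∃ b ∈ completedGraph g, dRect p b ≤ D) :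
    graphGap f g ≤ D := by
  apply Real.sSup_le _ hD
  rintro x ⟨p, hp, rfl⟩
  obtain ⟨b, hb, hd⟩ := h p hp
  refine csInf_le_of_le ⟨0, ?_⟩ ⟨b, hb, rfl⟩ hd
  rintro y ⟨c, _, rfl⟩
  exact dRect_nonneg _ _

lemma CG_step_cases (hn : 1 ≤ n) (hA0 : F 0 = 0) {t z : ℝ}
    (hp : (t, z) ∈ completedGraph (fun s => F ⌊(n:ℝ)*s⌋₊)) :
    t ∈ Set.Icc (0:ℝ) 1 ∧ ∃ k' : ℕ, k' ≤ ⌊(n:ℝ)*t⌋₊ ∧ ⌊(n:ℝ)*t⌋₊ ≤ k' + 1 ∧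
      z ∈ Set.uIcc (F k') (F ⌊(n:ℝ)*t⌋₊) := by
  obtain ⟨ht, lam, hlam, hz⟩ := hp
  simp only at ht hz
  refine ⟨ht, ?_⟩
  rcases eq_or_lt_of_le ht.1 with ht0 | ht0
  · -- t = 0
    have hteq : t = 0 := ht0.symm
    subst hteq
    have hk0 : ⌊(n:ℝ)*(0:ℝ)⌋₊ = 0 := by simp
    have hll : llim (fun s => F ⌊(n:ℝ)*s⌋₊) 0 = F 0 := by
      rw [llim, if_pos (le_refl (0:ℝ))]
      simp
    rw [hll, hk0] at hz
    rw [hA0] at hz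
    refine ⟨0, by omega, by omega, ?_⟩
    rw [hk0, hA0]
    exact mem_uIcc_of_lam hlam hz
  · -- t > 0
    have hnt0 : (0:ℝ) ≤ (n:ℝ)*t := by positivity
    have hll0 : llim (fun s => F ⌊(n:ℝ)*s⌋₊) t
        = Function.leftLim (fun s => F ⌊(n:ℝ)*s⌋₊) t := by
      rw [llim, if_neg (not_le.2 ht0)]
    rcases eq_or_lt_of_le (Nat.floor_le hnt0) with hfl | hfl
    · -- n*t = ⌊n*t⌋ exactly
      have hk1 : 1 ≤ ⌊(n:ℝ)*t⌋₊ := by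
        by_contra hcon
        have h0 : ⌊(n:ℝ)*t⌋₊ = 0 := by omega
        rw [h0] at hfl
        simp only [Nat.cast_zero] at hfl
        have : (0:ℝ) < (n:ℝ)*t := by positivity
        linarith
      have hleft := leftLim_step_of_int (F := F) hn hk1 hfl.symm
      rw [hll0, hleft] at hz
      exact ⟨⌊(n:ℝ)*t⌋₊ - 1, Nat.sub_le _ _, by omega, mem_uIcc_of_lam hlam hz⟩
    · have hleft := leftLim_step_of_lt (F := F) hn ht0 hfl
      rw [hll0, hleft] at hz
      exact ⟨⌊(n:ℝ)*t⌋₊, le_refl _, by omega, mem_uIcc_of_lam hlam hz⟩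

lemma gap_FG (hn : 1 ≤ n) (q : ℕ) (F G : ℕ → ℝ) (C : ℝ) (hC : 0 ≤ C)
    (hF0 : F 0 = 0) (hG0 : G 0 = 0)
    (hFmono : ∀ i i', i ≤ i' → i' ≤ n → F i ≤ F i')
    (hGmono : ∀ i i', 1 ≤ i → i ≤ i' → i' ≤ n → G i ≤ G i')
    (hGF : ∀ k, 1 ≤ k → k ≤ n → G k ≤ F k + C)
    (hFG : ∀ k, 1 ≤ k → k ≤ n → F k ≤ G (min (k+q) n) + C)
    (hGlb : ∀ k, 1 ≤ k → k ≤ n → -C ≤ G k) :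
    graphGap (fun s => F ⌊(n:ℝ)*s⌋₊) (fun s => G ⌊(n:ℝ)*s⌋₊)
      ≤ max C (((q:ℝ)+2)/n) := by
  have hnpos : (0:ℝ) < n := by positivity
  apply graphGap_le_aux _ _ _ (le_max_of_le_left hC)
  rintro ⟨t, z⟩ hp
  obtain ⟨ht, k', hk'le, hk'ge, hzmem⟩ := CG_step_cases hn hF0 hp
  set k := ⌊(n:ℝ)*t⌋₊ with hkdef
  have hkn : k ≤ n := floor_mul_le hn ht.2
  have hk'n : k' ≤ n := le_trans hk'le hkn
  have hbounds := uIcc_bounds hzmem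
  have hmin : min (F k') (F k) = F k' := min_eq_left (hFmono _ _ hk'le hkn)
  have hmax : max (F k') (F k) = F k := max_eq_right (hFmono _ _ hk'le hkn)
  rw [hmin] at hbounds
  rw [hmax] at hbounds
  have hzlo : F k' ≤ z := hbounds.1
  have hzhi : z ≤ F k := hbounds.2
  have hF'0 : 0 ≤ F k' := hF0 ▸ hFmono 0 k' (Nat.zero_le _) hk'n
  -- apply exists_close with jl := k', jr := min (k+q) n
  have hfloor_lt : (n:ℝ)*t < k + 1 := Nat.lt_floor_add_one _
  have hfloor_le : (k:ℝ) ≤ (n:ℝ)*t := Nat.floor_le (mul_nonneg (by positivity) ht.1)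
  apply exists_close hn q G hG0 hGmono hC ht k' (min (k+q) n) (min_le_right _ _)
    (le_min (le_trans hk'le (Nat.le_add_right _ _)) hk'n)
    (le_min (Nat.le_add_right _ _) hkn)
  · -- htl
    rw [sub_le_iff_le_add, ← add_div, le_div_iff₀ hnpos]
    have h1 : (k:ℝ) ≤ (k':ℝ) + 1 := by exact_mod_cast hk'ge
    nlinarith
  · -- htr
    rw [div_le_iff₀ hnpos, add_mul, div_mul_cancel₀ _ (ne_of_gt hnpos)]
    have h1 : ((min (k+q) n : ℕ):ℝ) ≤ (k:ℝ) + q := by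
      exact_mod_cast Nat.cast_le.2 (min_le_left (k+q) n)
    nlinarith
  · -- hz
    linarith
  · -- hlow
    rcases Nat.eq_zero_or_pos k' with h0 | h1
    · rw [h0] at hzlo
      rw [hF0] at hzlo
      rw [h0, hG0]
      linarith
    · linarith [hGF k' h1 hk'n]
  · -- hhigh
    rcases Nat.eq_zero_or_pos k with h0 | h1
    · have hz0 : z ≤ 0 := by rw [h0, hF0] at hzhi; exact hzhi
      rcases Nat.eq_zero_or_pos (min (k+q) n) with hm0 | hm1
      · rw [hm0, hG0]; linarith
      · linarith [hGlb _ hm1 (min_le_right _ _)]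
    · linarith [hFG k h1 hkn]

lemma gap_GF (hn : 1 ≤ n) (q : ℕ) (F G : ℕ → ℝ) (C : ℝ) (hC : 0 ≤ C)
    (hF0 : F 0 = 0) (hG0 : G 0 = 0)
    (hFmono : ∀ i i', i ≤ i' → i' ≤ n → F i ≤ F i')
    (hGmono : ∀ i i', 1 ≤ i → i ≤ i' → i' ≤ n → G i ≤ G i')
    (hGF : ∀ k, 1 ≤ k → k ≤ n → G k ≤ F k + C)
    (hFG : ∀ k, 1 ≤ k → k ≤ n → F k ≤ G (min (k+q) n) + C)
    (hGlb : ∀ k, 1 ≤ k → k ≤ n → -C ≤ G k) :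
    graphGap (fun s => G ⌊(n:ℝ)*s⌋₊) (fun s => F ⌊(n:ℝ)*s⌋₊)
      ≤ max C (((q:ℝ)+2)/n) := by
  have hnpos : (0:ℝ) < n := by positivity
  apply graphGap_le_aux _ _ _ (le_max_of_le_left hC)
  rintro ⟨t, z⟩ hp
  obtain ⟨ht, k', hk'le, hk'ge, hzmem⟩ := CG_step_cases hn hG0 hp
  set k := ⌊(n:ℝ)*t⌋₊ with hkdef
  have hkn : k ≤ n := floor_mul_le hn ht.2
  have hk'n : k' ≤ n := le_trans hk'le hkn
  have hbounds := uIcc_bounds hzmem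
  have hfloor_lt : (n:ℝ)*t < k + 1 := Nat.lt_floor_add_one _
  have hfloor_le : (k:ℝ) ≤ (n:ℝ)*t := Nat.floor_le (mul_nonneg (by positivity) ht.1)
  have hFmono1 : ∀ i i', 1 ≤ i → i ≤ i' → i' ≤ n → F i ≤ F i' :=
    fun i i' _ h2 h3 => hFmono i i' h2 h3
  apply exists_close hn q F hF0 hFmono1 hC ht (k' - q) k hkn
    (le_trans (Nat.sub_le _ _) hk'le) (le_refl _)
  · -- htl
    rw [sub_le_iff_le_add, ← add_div, le_div_iff₀ hnpos]
    have h1 : (k:ℝ) ≤ (k':ℝ) + 1 := by exact_mod_cast hk'ge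
    have h2 : (k':ℝ) - q ≤ ((k' - q : ℕ):ℝ) := by
      rcases le_total q k' with h | h
      · rw [Nat.cast_sub h]
      · have : k' - q = 0 := by omega
        rw [this]
        push_cast
        have : (k':ℝ) ≤ q := by exact_mod_cast h
        linarith
    nlinarith
  · -- htr
    rw [div_le_iff₀ hnpos, add_mul, div_mul_cancel₀ _ (ne_of_gt hnpos)]
    nlinarith
  · -- hz
    rcases Nat.eq_zero_or_pos k' with h0 | h1
    · rw [h0, hG0] at hbounds
      rcases Nat.eq_zero_or_pos k with hk0 | hk1
      · rw [hk0, hG0] at hbounds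
        have := hbounds.1
        simp only [min_self] at this
        linarith
      · have hglb := hGlb k hk1 hkn
        have h1 := hbounds.1
        rcases le_total (0:ℝ) (G k) with hc | hc
        · rw [min_eq_left hc] at h1; linarith
        · rw [min_eq_right hc] at h1; linarith
    · have e1 := hGlb k' h1 hk'n
      have e2 := hGlb k (le_trans h1 hk'le) hkn
      calc -C ≤ min (G k') (G k) := le_min e1 e2
        _ ≤ z := hbounds.1
  · -- hlow
    rcases Nat.lt_or_ge k' (q+1) with h0 | h1
    · have : k' - q = 0 := by omega
      rw [this, hF0]
      -- need -C ≤ z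
      rcases Nat.eq_zero_or_pos k' with hk'0 | hk'1
      · rw [hk'0, hG0] at hbounds
        rcases Nat.eq_zero_or_pos k with hk0 | hk1
        · rw [hk0, hG0] at hbounds
          have := hbounds.1
          simp only [min_self] at this
          linarith
        · have := hGlb k hk1 hkn
          have h1 := hbounds.1
          rcases le_total (0:ℝ) (G k) with hc | hc
          · rw [min_eq_left hc] at h1; linarith
          · rw [min_eq_right hc] at h1; linarith
      · have := hGlb k' hk'1 hk'n
        have e2 := hGlb k (le_trans hk'1 hk'le) hkn
        have h1 := hbounds.1
        have : -C ≤ min (G k') (G k) := le_min this e2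
        linarith
    · -- k' ≥ q + 1
      have hq : q ≤ k' := by omega
      have hjl1 : 1 ≤ k' - q := by omega
      have hjln : k' - q ≤ n := le_trans (Nat.sub_le _ _) hk'n
      have := hFG (k' - q) hjl1 hjln
      have heq : min (k' - q + q) n = k' := by
        rw [Nat.sub_add_cancel hq]
        exact min_eq_left hk'n
      rw [heq] at this
      -- G k' ≤ z
      have hGk' : G k' ≤ z := by
        have hmono' := hGmono k' k (by omega) hk'le hkn
        have := hbounds.1
        rw [min_eq_left hmono'] at this
        linarith
      linarith
  · -- hhigh
    rcases Nat.eq_zero_or_pos k' with h0 | h1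
    · rw [h0, hG0] at hbounds
      rcases Nat.eq_zero_or_pos k with hk0 | hk1
      · rw [hk0, hG0] at hbounds
        have := hbounds.2
        simp only [max_self] at this
        rw [hk0, hF0]
        linarith
      · have e1 := hGF k hk1 hkn
        have hF0k : (0:ℝ) ≤ F k := hF0 ▸ hFmono 0 k (Nat.zero_le _) hkn
        have h2 := hbounds.2
        rcases le_total (0:ℝ) (G k) with hc | hc
        · rw [max_eq_right hc] at h2; linarith
        · rw [max_eq_left hc] at h2; linarith
    · have hmono' := hGmono k' k h1 hk'le hkn
      have h2 := hbounds.2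
      rw [max_eq_right hmono'] at h2
      linarith [hGF k (le_trans h1 hk'le) hkn]

lemma dM2_step_le (hn : 1 ≤ n) (q : ℕ) (F G : ℕ → ℝ) (C : ℝ) (hC : 0 ≤ C)
    (hF0 : F 0 = 0) (hG0 : G 0 = 0)
    (hFmono : ∀ i i', i ≤ i' → i' ≤ n → F i ≤ F i')
    (hGmono : ∀ i i', 1 ≤ i → i ≤ i' → i' ≤ n → G i ≤ G i')
    (hGF : ∀ k, 1 ≤ k → k ≤ n → G k ≤ F k + C)
    (hFG : ∀ k, 1 ≤ k → k ≤ n → F k ≤ G (min (k+q) n) + C)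
    (hGlb : ∀ k, 1 ≤ k → k ≤ n → -C ≤ G k) :
    dM2 (fun s => F ⌊(n:ℝ)*s⌋₊) (fun s => G ⌊(n:ℝ)*s⌋₊)
      ≤ max C (((q:ℝ)+2)/n) :=
  max_le (gap_FG hn q F G C hC hF0 hG0 hFmono hGmono hGF hFG hGlb)
    (gap_GF hn q F G C hC hF0 hG0 hFmono hGmono hGF hFG hGlb)


lemma tendsto_zero_of_mul_tendsto {u : ℕ → ℝ} {c : ℝ}
    (h : Filter.Tendsto (fun n : ℕ => (n:ℝ) * u n) atTop (𝓝 c)) :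
    Filter.Tendsto u atTop (𝓝 0) := by
  have h2 : Filter.Tendsto (fun n : ℕ => (1/(n:ℝ)) * ((n:ℝ) * u n)) atTop (𝓝 (0 * c)) :=
    Filter.Tendsto.mul tendsto_one_div_atTop_nhds_zero_nat h
  rw [zero_mul] at h2
  apply h2.congr'
  filter_upwards [Filter.eventually_ge_atTop 1] with n hn
  have : (n:ℝ) ≠ 0 := by positivity
  field_simp

section Tail

variable {Ω : Type} [MeasurableSpace Ω] (P : Measure Ω) [IsProbabilityMeasure P]
  (Zr : Ω → ℝ) {α : ℝ} (a : ℕ → ℝ)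

lemma tail_antitone {x y : ℝ} (hxy : x ≤ y) :
    (P {ω | y < |Zr ω|}).toReal ≤ (P {ω | x < |Zr ω|}).toReal := by
  apply ENNReal.toReal_le_toReal (measure_ne_top _ _) (measure_ne_top _ _) |>.mpr
  exact measure_mono (fun ω hω => lt_of_le_of_lt hxy hω)

lemma norm_seq_tendsto_atTop (hrv : RegVarAbs P Zr α) (ha : NormSeq P Zr a) :
    Filter.Tendsto a atTop atTop := by
  obtain ⟨hα, L, ⟨hLpos, hLrat⟩, hform⟩ := hrv
  obtain ⟨hapos, hna⟩ := ha
  have htail0 : Filter.Tendsto (fun n => (P {ω | a n < |Zr ω|}).toReal) atTop (𝓝 0) :=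
    tendsto_zero_of_mul_tendsto hna
  rw [tendsto_atTop]
  intro M
  obtain ⟨x1, hx1⟩ := eventually_atTop.1 hLpos
  set x0 := max (max M x1) 1 with hx0
  have hx0pos : (0:ℝ) < x0 := lt_of_lt_of_le one_pos (le_max_right _ _)
  have hx0L : 0 < L x0 := hx1 x0 (le_trans (le_max_right _ _) (le_max_left _ _))
  have htx0 : 0 < (P {ω | x0 < |Zr ω|}).toReal := by
    rw [hform x0 hx0pos]
    have : (0:ℝ) < x0 ^ (-α) := Real.rpow_pos_of_pos hx0pos _
    positivity
  filter_upwards [htail0.eventually_lt_const htx0] with n hn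
  by_contra hcon
  push_neg at hcon
  have hle : a n ≤ x0 := le_trans hcon.le (le_trans (le_max_left M x1) (le_max_left _ _))
  exact absurd (tail_antitone P Zr hle) (not_le.2 hn)

lemma tail_scale {α : ℝ} (hrv : RegVarAbs P Zr α) (ha : NormSeq P Zr a) {c : ℝ} (hc : 0 < c) :
    Filter.Tendsto (fun n : ℕ => (n:ℝ) * (P {ω | c * a n < |Zr ω|}).toReal) atTop
      (𝓝 (c ^ (-α))) := by
  have hatop := norm_seq_tendsto_atTop P Zr a hrv ha
  obtain ⟨hα, L, ⟨hLpos, hLrat⟩, hform⟩ := hrv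
  obtain ⟨hapos, hna⟩ := ha
  obtain ⟨x1, hx1⟩ := eventually_atTop.1 hLpos
  have hLcomp : Filter.Tendsto (fun n => L (c * a n) / L (a n)) atTop (𝓝 1) :=
    (hLrat c hc).comp hatop
  have hmain : Filter.Tendsto (fun n : ℕ => ((n:ℝ) * (P {ω | a n < |Zr ω|}).toReal) *
      (c ^ (-α) * (L (c * a n) / L (a n)))) atTop (𝓝 (1 * (c ^ (-α) * 1))) :=
    hna.mul (tendsto_const_nhds.mul hLcomp)
  rw [one_mul, mul_one] at hmain
  apply hmain.congr'
  filter_upwards [hatop.eventually_ge_atTop (max x1 1)] with n hn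
  have ha1 : (0:ℝ) < a n := hapos n
  have hL1 : 0 < L (a n) := hx1 _ (le_trans (le_max_left _ _) hn)
  have hLne : L (a n) ≠ 0 := ne_of_gt hL1
  have hrw1 : (P {ω | a n < |Zr ω|}).toReal = (a n) ^ (-α) * L (a n) := hform _ ha1
  have hrw2 : (P {ω | c * a n < |Zr ω|}).toReal = (c * a n) ^ (-α) * L (c * a n) :=
    hform _ (by positivity)
  rw [hrw1, hrw2, Real.mul_rpow (le_of_lt hc) (le_of_lt ha1)]
  field_simp

lemma tendsto_prob_lt_neg_atTop {X : Ω → ℝ} (hX : Measurable X) {b : ℕ → ℝ}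
    (hb : Filter.Tendsto b atTop atTop) :
    Filter.Tendsto (fun n => P {ω | X ω < - b n}) atTop (𝓝 0) := by
  have hA : Filter.Tendsto (fun m : ℕ => P (X ⁻¹' Set.Iic (-(m:ℝ)))) atTop (𝓝 0) := by
    have h0 : (⋂ m : ℕ, X ⁻¹' Set.Iic (-(m:ℝ))) = ∅ := by
      ext ω
      simp only [Set.mem_iInter, Set.mem_empty_iff_false, iff_false, not_forall,
        Set.mem_preimage, Set.mem_Iic, not_le]
      obtain ⟨m, hm⟩ := exists_nat_gt (-X ω)
      exact ⟨m, by linarith⟩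
    have hanti : Antitone (fun m : ℕ => X ⁻¹' Set.Iic (-(m:ℝ))) := by
      intro m m' hmm' ω hω
      simp only [Set.mem_preimage, Set.mem_Iic] at hω ⊢
      have : (m:ℝ) ≤ (m':ℝ) := Nat.cast_le.2 hmm'
      linarith
    have := tendsto_measure_iInter_atTop (μ := P)
      (fun m => (hX measurableSet_Iic).nullMeasurableSet) hanti ⟨0, measure_ne_top _ _⟩
    rw [h0, measure_empty] at this
    exact this
  have hfloor : Filter.Tendsto (fun n => ⌊b n⌋₊) atTop atTop :=
    tendsto_nat_floor_atTop.comp hb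
  have hcomp : Filter.Tendsto (fun n => P (X ⁻¹' Set.Iic (-(⌊b n⌋₊:ℝ)))) atTop (𝓝 0) :=
    hA.comp hfloor
  apply tendsto_of_tendsto_of_tendsto_of_le_of_le' tendsto_const_nhds hcomp
  · exact Filter.Eventually.of_forall fun n => zero_le
  · filter_upwards [hb.eventually_ge_atTop 0] with n hn
    apply measure_mono
    intro ω hω
    simp only [Set.mem_setOf_eq] at hω
    simp only [Set.mem_preimage, Set.mem_Iic]
    have := Nat.floor_le hn
    linarith

end Tail

/-! ### Step maxima -/

section SM

def SM (a : ℝ) (Y : ℕ → ℝ) (k : ℕ) : ℝ :=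
  if h : k = 0 then 0 else
    ((Finset.range k).sup' (Finset.nonempty_range_iff.mpr h) fun i => Y (i+1)) / a

lemma maxProc_eq_SM (a : ℝ) (Y : ℕ → ℝ) (n : ℕ) :
    maxProc a Y n = fun t => SM a Y ⌊(n:ℝ)*t⌋₊ := rfl

variable {a : ℝ} {Y : ℕ → ℝ}

lemma SM_zero : SM a Y 0 = 0 := by simp [SM]

lemma SM_le_iff (ha : 0 < a) {k : ℕ} (hk : k ≠ 0) {c : ℝ} :
    SM a Y k ≤ c ↔ ∀ i ∈ Finset.range k, Y (i+1) ≤ a * c := by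
  rw [SM, dif_neg hk, div_le_iff₀ ha, Finset.sup'_le_iff]
  constructor
  · intro h i hi; rw [mul_comm]; exact h i hi
  · intro h i hi; rw [mul_comm]; exact h i hi

lemma le_SM (ha : 0 < a) {k i : ℕ} (hi : i ∈ Finset.range k) :
    Y (i+1) ≤ a * SM a Y k := by
  have hk : k ≠ 0 := by rintro rfl; simp at hi
  rw [SM, dif_neg hk, ← mul_div_assoc, mul_div_cancel_left₀ _ (ne_of_gt ha)]
  exact Finset.le_sup' (fun i => Y (i+1)) hi

lemma SM_mono1 (ha : 0 < a) {k l : ℕ} (hk : 1 ≤ k) (hkl : k ≤ l) :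
    SM a Y k ≤ SM a Y l := by
  have hk0 : k ≠ 0 := by omega
  have hl0 : l ≠ 0 := by omega
  rw [SM, SM, dif_neg hk0, dif_neg hl0]
  apply (div_le_div_iff_of_pos_right ha).2
  apply Finset.sup'_le
  intro i hi
  exact Finset.le_sup' (fun i => Y (i+1))
    (Finset.mem_range.2 (lt_of_lt_of_le (Finset.mem_range.1 hi) hkl))

lemma SM_nonneg (ha : 0 < a) (hY : ∀ i, 0 ≤ Y i) (k : ℕ) : 0 ≤ SM a Y k := by
  rcases Nat.eq_zero_or_pos k with rfl | hk
  · rw [SM_zero]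
  · have h := le_SM (Y := Y) ha (Finset.mem_range.2 hk : 0 ∈ Finset.range k)
    nlinarith [hY 1]

lemma SM_mono_of_nonneg (ha : 0 < a) (hY : ∀ i, 0 ≤ Y i) {k l : ℕ} (hkl : k ≤ l) :
    SM a Y k ≤ SM a Y l := by
  rcases Nat.eq_zero_or_pos k with rfl | hk
  · rw [SM_zero]; exact SM_nonneg ha hY l
  · exact SM_mono1 ha hk hkl

end SM

/-! ### Weight function facts -/

section Wt

variable (q : ℕ) (φ : ℕ → ℝ)

lemma phiPlusFin_nonneg : 0 ≤ phiPlusFin q φ := by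
  rw [phiPlusFin]
  exact le_trans (le_max_right (φ 0) 0)
    (Finset.le_sup' (fun j => max (φ j) 0) (Finset.mem_range.2 (Nat.succ_pos q)))

lemma phiMinusFin_nonneg : 0 ≤ phiMinusFin q φ := by
  rw [phiMinusFin]
  exact le_trans (le_max_right (-φ 0) 0)
    (Finset.le_sup' (fun j => max (-φ j) 0) (Finset.mem_range.2 (Nat.succ_pos q)))

lemma wt_nonneg {φp φm : ℝ} (hp : 0 ≤ φp) (hm : 0 ≤ φm) (x : ℝ) :
    0 ≤ wt φp φm x := by
  rw [wt]
  split_ifs with h1 h2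
  · positivity
  · positivity
  · simp

lemma mul_le_wt {j : ℕ} (hj : j ∈ Finset.range (q+1)) (x : ℝ) :
    φ j * x ≤ wt (phiPlusFin q φ) (phiMinusFin q φ) x := by
  rcases lt_trichotomy x 0 with hx | hx | hx
  · rw [wt, if_neg (by linarith), if_pos hx, abs_of_neg hx]
    have h1 : -φ j ≤ phiMinusFin q φ := by
      rw [phiMinusFin]
      exact le_trans (le_max_left _ _) (Finset.le_sup' (fun j => max (-φ j) 0) hj)
    nlinarith
  · simp [hx, wt]
  · rw [wt, if_pos hx, abs_of_pos hx]
    have h1 : φ j ≤ phiPlusFin q φ := by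
      rw [phiPlusFin]
      exact le_trans (le_max_left _ _) (Finset.le_sup' (fun j => max (φ j) 0) hj)
    nlinarith

lemma wt_le_of_abs_le {φp φm Φ T x : ℝ} (hp0 : 0 ≤ φp) (hm0 : 0 ≤ φm)
    (hp : φp ≤ Φ) (hm : φm ≤ Φ) (hΦ : 0 ≤ Φ)
    (hx : |x| ≤ T) : wt φp φm x ≤ Φ * T := by
  have hT : 0 ≤ T := le_trans (abs_nonneg x) hx
  rw [wt]
  split_ifs with h1 h2
  · calc |x| * φp ≤ T * Φ := mul_le_mul hx hp hp0 hT
      _ = Φ * T := mul_comm _ _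
  · calc |x| * φm ≤ T * Φ := mul_le_mul hx hm hm0 hT
      _ = Φ * T := mul_comm _ _
  · rw [mul_zero]; exact mul_nonneg hΦ hT

end Wt

section Heart

lemma event_dM2_bound (q : ℕ) (φ : ℕ → ℝ) (n : ℕ) (hn : 1 ≤ n) (a T : ℝ)
    (ha : 0 < a) (hT : 0 < T) (Zv : ℤ → ℝ)
    (hpair : ∀ i j : ℤ, 1 - (q:ℤ) ≤ i → i < j → j ≤ (n:ℤ) → j ≤ i + q →
      ¬(T < |Zv i| ∧ T < |Zv j|))
    (hedgeL : ∀ i : ℤ, 1 - (q:ℤ) ≤ i → i ≤ 0 → |Zv i| ≤ T)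
    (hedgeR : ∀ i : ℤ, (n:ℤ) - q < i → i ≤ (n:ℤ) → |Zv i| ≤ T)
    (hX1 : -T ≤ ∑ j ∈ Finset.range (q+1), φ j * Zv (1 - (j:ℤ))) :
    dM2 (fun t => SM a (fun i => wt (phiPlusFin q φ) (phiMinusFin q φ) (Zv (i:ℤ))) ⌊(n:ℝ)*t⌋₊)
        (fun t => SM a (fun i => ∑ j ∈ Finset.range (q+1), φ j * Zv ((i:ℤ) - (j:ℤ))) ⌊(n:ℝ)*t⌋₊)
      ≤ max ((((q:ℝ)+1) * ((Finset.range (q+1)).sup'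
            (Finset.nonempty_range_iff.mpr (Nat.succ_ne_zero q)) fun j => |φ j|) + 1) * (T / a))
          (((q:ℝ)+2)/(n:ℝ)) := by
  classical
  set Φ := (Finset.range (q+1)).sup'
      (Finset.nonempty_range_iff.mpr (Nat.succ_ne_zero q)) (fun j => |φ j|) with hΦdef
  have hΦj : ∀ j ∈ Finset.range (q+1), |φ j| ≤ Φ :=
    fun j hj => Finset.le_sup' (fun j => |φ j|) hj
  have hΦ0 : 0 ≤ Φ :=
    le_trans (abs_nonneg (φ 0)) (hΦj 0 (Finset.mem_range.2 (Nat.succ_pos q)))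
  have hφp0 : 0 ≤ phiPlusFin q φ := phiPlusFin_nonneg q φ
  have hφm0 : 0 ≤ phiMinusFin q φ := phiMinusFin_nonneg q φ
  have hφpΦ : phiPlusFin q φ ≤ Φ := by
    rw [phiPlusFin]
    apply Finset.sup'_le
    intro j hj
    exact le_trans (max_le (le_abs_self _) (abs_nonneg _)) (hΦj j hj)
  have hφmΦ : phiMinusFin q φ ≤ Φ := by
    rw [phiMinusFin]
    apply Finset.sup'_le
    intro j hj
    exact le_trans (max_le (neg_le_abs _) (abs_nonneg _)) (hΦj j hj)
  set C := (((q:ℝ)+1) * Φ + 1) * (T / a) with hCdef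
  have hTa : 0 < T / a := div_pos hT ha
  have hC0 : 0 ≤ C := by
    rw [hCdef]
    have h1 : (0:ℝ) ≤ ((q:ℝ)+1) * Φ + 1 := by nlinarith [hΦ0, Nat.cast_nonneg (α := ℝ) q]
    exact mul_nonneg h1 hTa.le
  have haC : a * C = ((q:ℝ)+1)*Φ*T + T := by
    rw [hCdef]
    field_simp
  have hΦT : 0 ≤ Φ * T := mul_nonneg hΦ0 hT.le
  have hqΦT : 0 ≤ (q:ℝ)*Φ*T := mul_nonneg (mul_nonneg (Nat.cast_nonneg q) hΦ0) hT.le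
  set Ywt : ℕ → ℝ := fun i => wt (phiPlusFin q φ) (phiMinusFin q φ) (Zv (i:ℤ)) with hYwtdef
  set YX : ℕ → ℝ := fun i => ∑ j ∈ Finset.range (q+1), φ j * Zv ((i:ℤ) - (j:ℤ)) with hYXdef
  set F := SM a Ywt with hFdef
  set G := SM a YX with hGdef
  have hYwtnn : ∀ i, 0 ≤ Ywt i := fun i => wt_nonneg hφp0 hφm0 _
  -- window dichotomy
  have hwin : ∀ i' : ℕ, 1 ≤ i' → i' ≤ n →
      (∀ j ∈ Finset.range (q+1), |Zv ((i':ℤ) - j)| ≤ T) ∨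
      (∃ j0 ∈ Finset.range (q+1), T < |Zv ((i':ℤ) - j0)| ∧ 1 ≤ (i':ℤ) - j0 ∧
        (i':ℤ) - j0 ≤ (n:ℤ) - q ∧
        ∀ j ∈ Finset.range (q+1), j ≠ j0 → |Zv ((i':ℤ) - j)| ≤ T) := by
    intro i' hi'1 hi'n
    by_cases hall : ∀ j ∈ Finset.range (q+1), |Zv ((i':ℤ) - j)| ≤ T
    · exact Or.inl hall
    push_neg at hall
    obtain ⟨j0, hj0mem, hbig⟩ := hall
    have hj0q : (j0:ℤ) ≤ q := by exact_mod_cast Nat.lt_succ_iff.1 (Finset.mem_range.1 hj0mem)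
    have hi'1' : (1:ℤ) ≤ (i':ℤ) := by exact_mod_cast hi'1
    have hi'n' : (i':ℤ) ≤ (n:ℤ) := by exact_mod_cast hi'n
    have hj00 : (0:ℤ) ≤ (j0:ℤ) := Int.natCast_nonneg j0
    have hm_lb : 1 - (q:ℤ) ≤ (i':ℤ) - j0 := by omega
    have hm1 : 1 ≤ (i':ℤ) - j0 := by
      by_contra hcon
      push_neg at hcon
      exact absurd (hedgeL _ hm_lb (by omega)) (not_le.2 hbig)
    have hm_ub : (i':ℤ) - j0 ≤ (n:ℤ) - q := by
      by_contra hcon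
      push_neg at hcon
      exact absurd (hedgeR _ hcon (by omega)) (not_le.2 hbig)
    refine Or.inr ⟨j0, hj0mem, hbig, hm1, hm_ub, ?_⟩
    intro j hjmem hne
    have hjq : (j:ℤ) ≤ q := by exact_mod_cast Nat.lt_succ_iff.1 (Finset.mem_range.1 hjmem)
    have hj0' : (0:ℤ) ≤ (j:ℤ) := Int.natCast_nonneg j
    have hne' : (i':ℤ) - j ≠ (i':ℤ) - j0 := by
      intro hc
      apply hne
      have : (j:ℤ) = (j0:ℤ) := by omega
      exact_mod_cast this
    by_contra hcon
    push_neg at hcon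
    rcases lt_or_gt_of_ne hne' with hlt | hgt
    · exact hpair _ _ (by omega) hlt (by omega) (by omega) ⟨hcon, hbig⟩
    · exact hpair _ _ (by omega) hgt (by omega) (by omega) ⟨hbig, hcon⟩
  -- sum bounds
  have hsum_big : ∀ (i'' : ℕ) (j0 : ℕ), j0 ∈ Finset.range (q+1) →
      (∀ j ∈ Finset.range (q+1), j ≠ j0 → |Zv ((i'':ℤ) - j)| ≤ T) →
      |YX i'' - φ j0 * Zv ((i'':ℤ) - j0)| ≤ (q:ℝ) * Φ * T := by
    intro i'' j0 hj0mem hothers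
    have hsplit : YX i'' - φ j0 * Zv ((i'':ℤ) - j0)
        = ∑ j ∈ (Finset.range (q+1)).erase j0, φ j * Zv ((i'':ℤ) - j) :=
      (Finset.sum_erase_eq_sub hj0mem).symm
    rw [hsplit]
    calc |∑ j ∈ (Finset.range (q+1)).erase j0, φ j * Zv ((i'':ℤ) - j)|
        ≤ ∑ j ∈ (Finset.range (q+1)).erase j0, |φ j * Zv ((i'':ℤ) - j)| :=
          Finset.abs_sum_le_sum_abs _ _
      _ ≤ ∑ _j ∈ (Finset.range (q+1)).erase j0, Φ * T := by
          apply Finset.sum_le_sum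
          intro j hj
          rw [abs_mul]
          exact mul_le_mul (hΦj j (Finset.mem_of_mem_erase hj))
            (hothers j (Finset.mem_of_mem_erase hj) (Finset.ne_of_mem_erase hj))
            (abs_nonneg _) hΦ0
      _ = (q:ℝ) * Φ * T := by
          rw [Finset.sum_const, Finset.card_erase_of_mem hj0mem, Finset.card_range,
            Nat.add_sub_cancel, nsmul_eq_mul]
          ring
  have hsum_small : ∀ i'' : ℕ,
      (∀ j ∈ Finset.range (q+1), |Zv ((i'':ℤ) - j)| ≤ T) →
      |YX i''| ≤ ((q:ℝ)+1) * Φ * T := by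
    intro i'' hsm
    calc |YX i''| ≤ ∑ j ∈ Finset.range (q+1), |φ j * Zv ((i'':ℤ) - j)| :=
          Finset.abs_sum_le_sum_abs _ _
      _ ≤ ∑ _j ∈ Finset.range (q+1), Φ * T := by
          apply Finset.sum_le_sum
          intro j hj
          rw [abs_mul]
          exact mul_le_mul (hΦj j hj) (hsm j hj) (abs_nonneg _) hΦ0
      _ = ((q:ℝ)+1) * Φ * T := by
          rw [Finset.sum_const, Finset.card_range, nsmul_eq_mul]
          push_cast
          ring
  have hYX1 : YX 1 = ∑ j ∈ Finset.range (q+1), φ j * Zv (1 - (j:ℤ)) := by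
    rw [hYXdef]
    norm_num
  have hGlb' : ∀ k, 1 ≤ k → -(T/a) ≤ G k := by
    intro k hk
    have h1 : YX (0+1) ≤ a * G k := le_SM ha (Finset.mem_range.2 hk)
    rw [zero_add, hYX1] at h1
    have h2 : -T ≤ a * G k := le_trans hX1 h1
    rw [← neg_div, div_le_iff₀ ha]
    linarith [h2]
  have hTaC : T/a ≤ C := by
    rw [hCdef]
    nlinarith [hΦ0, hTa, Nat.cast_nonneg (α := ℝ) q]
  -- the three step inequalities
  have hGF : ∀ k, 1 ≤ k → k ≤ n → G k ≤ F k + C := by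
    intro k hk1 hkn
    rw [hGdef, SM_le_iff ha (by omega)]
    intro i hi
    have hik : i + 1 ≤ k := Finset.mem_range.1 hi
    have hin : i + 1 ≤ n := le_trans hik hkn
    have hFk0 : 0 ≤ F k := SM_nonneg ha hYwtnn k
    have haFk : 0 ≤ a * F k := mul_nonneg ha.le hFk0
    have hkey : a * (F k + C) = a * F k + (((q:ℝ)+1)*Φ*T + T) := by rw [mul_add, haC]
    rcases hwin (i+1) (by omega) hin with hsmall | ⟨j0, hj0mem, hbig, hm1, hmub, hothers⟩
    · have h2 : YX (i+1) ≤ ((q:ℝ)+1)*Φ*T :=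
        le_trans (le_abs_self _) (hsum_small (i+1) hsmall)
      show YX (i+1) ≤ a * (F k + C)
      rw [hkey]
      linarith
    · have h1 := hsum_big (i+1) j0 hj0mem hothers
      have h2 : YX (i+1) ≤ φ j0 * Zv (((i+1:ℕ):ℤ) - j0) + (q:ℝ)*Φ*T := by
        have := (abs_le.1 h1).2
        linarith
      have h3 : φ j0 * Zv (((i+1:ℕ):ℤ) - j0)
          ≤ wt (phiPlusFin q φ) (phiMinusFin q φ) (Zv (((i+1:ℕ):ℤ) - j0)) :=
        mul_le_wt q φ hj0mem _
      have hmnn : (0:ℤ) ≤ ((i+1:ℕ):ℤ) - j0 := by omega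
      set mn := (((i+1:ℕ):ℤ) - j0).toNat with hmndef
      have hcast : ((mn:ℕ):ℤ) = ((i+1:ℕ):ℤ) - j0 := Int.toNat_of_nonneg hmnn
      have hmn1 : 1 ≤ mn := by omega
      have hj00 : (0:ℤ) ≤ (j0:ℤ) := Int.natCast_nonneg j0
      have hmnk : mn ≤ k := by
        have h5 : ((i+1:ℕ):ℤ) ≤ (k:ℤ) := by exact_mod_cast hik
        omega
      have h4 : Ywt ((mn - 1) + 1) ≤ a * F k := le_SM ha (Finset.mem_range.2 (by omega))
      rw [show (mn - 1) + 1 = mn by omega] at h4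
      have h6 : Ywt mn = wt (phiPlusFin q φ) (phiMinusFin q φ) (Zv (((i+1:ℕ):ℤ) - j0)) := by
        rw [hYwtdef]
        simp only
        rw [hcast]
      rw [h6] at h4
      show YX (i+1) ≤ a * (F k + C)
      rw [hkey]
      linarith
  have hGlbC : ∀ k, 1 ≤ k → k ≤ n → -C ≤ G k := by
    intro k hk _
    linarith [hGlb' k hk]
  have hFG : ∀ k, 1 ≤ k → k ≤ n → F k ≤ G (min (k+q) n) + C := by
    intro k hk1 hkn
    have hm'1 : 1 ≤ min (k+q) n := le_min (by omega) hn
    have hm'n : min (k+q) n ≤ n := min_le_right _ _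
    have hGm' := hGlb' (min (k+q) n) hm'1
    have hblw : -T ≤ a * G (min (k+q) n) := by
      have h := mul_le_mul_of_nonneg_left hGm' ha.le
      rw [mul_neg, mul_div_cancel₀ _ (ne_of_gt ha)] at h
      linarith
    rw [hFdef, SM_le_iff ha (by omega)]
    intro i hi
    have hik : i + 1 ≤ k := Finset.mem_range.1 hi
    have hin : i + 1 ≤ n := le_trans hik hkn
    have hkey : a * (G (min (k+q) n) + C) = a * G (min (k+q) n) + (((q:ℝ)+1)*Φ*T + T) := by
      rw [mul_add, haC]
    show Ywt (i+1) ≤ a * (G (min (k+q) n) + C)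
    rcases le_or_gt |Zv ((i+1:ℕ):ℤ)| T with hsm | hbg
    · have hwtle : Ywt (i+1) ≤ Φ * T := wt_le_of_abs_le hφp0 hφm0 hφpΦ hφmΦ hΦ0 hsm
      rw [hkey]
      nlinarith
    · -- Zv (i+1) is big
      have hi'1' : (1:ℤ) ≤ ((i+1:ℕ):ℤ) := by exact_mod_cast Nat.le_add_left 1 i
      have hi'n' : ((i+1:ℕ):ℤ) ≤ (n:ℤ) := by exact_mod_cast hin
      have hi'edge : ((i+1:ℕ):ℤ) ≤ (n:ℤ) - q := by
        by_contra hcon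
        push_neg at hcon
        exact absurd (hedgeR _ hcon hi'n') (not_le.2 hbg)
      rcases lt_trichotomy (Zv ((i+1:ℕ):ℤ)) 0 with hzneg | hzzero | hzpos
      · -- negative case
        by_cases hφm' : phiMinusFin q φ ≤ 0
        · have hz0 : phiMinusFin q φ = 0 := le_antisymm hφm' hφm0
          have : Ywt (i+1) = 0 := by
            rw [hYwtdef]
            simp only
            rw [wt, if_neg (by linarith), if_pos hzneg, hz0, mul_zero]
          rw [this, hkey]
          linarith
        · push_neg at hφm'
          obtain ⟨js, hjsmem, hjseq⟩ := Finset.exists_mem_eq_sup'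
            (Finset.nonempty_range_iff.mpr (Nat.succ_ne_zero q)) (fun j => max (-φ j) 0)
          have hjseq' : phiMinusFin q φ = max (-φ js) 0 := hjseq
          have hφjs : φ js = -(phiMinusFin q φ) := by
            rcases le_or_gt (-φ js) 0 with h | h
            · rw [hjseq', max_eq_right h] at hφm'
              exact absurd hφm' (lt_irrefl 0)
            · rw [hjseq', max_eq_left h.le]
              ring
          have hjsq : (js:ℤ) ≤ q := by
            exact_mod_cast Nat.lt_succ_iff.1 (Finset.mem_range.1 hjsmem)
          have hjs0 : (0:ℤ) ≤ (js:ℤ) := Int.natCast_nonneg js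
          have hi''n : i + 1 + js ≤ n := by
            have : ((i+1+js:ℕ):ℤ) = ((i+1:ℕ):ℤ) + js := by push_cast; ring
            omega
          have hoth : ∀ j ∈ Finset.range (q+1), j ≠ js →
              |Zv (((i+1+js:ℕ):ℤ) - j)| ≤ T := by
            intro j hjmem hne
            have hjq : (j:ℤ) ≤ q := by
              exact_mod_cast Nat.lt_succ_iff.1 (Finset.mem_range.1 hjmem)
            have hj0' : (0:ℤ) ≤ (j:ℤ) := Int.natCast_nonneg j
            have hcastw : ((i+1+js:ℕ):ℤ) = ((i+1:ℕ):ℤ) + js := by push_cast; ring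
            have hne2 : (j:ℤ) ≠ (js:ℤ) := fun hc => hne (by exact_mod_cast hc)
            have hw_i' : ((i+1+js:ℕ):ℤ) - j ≠ ((i+1:ℕ):ℤ) := by omega
            by_contra hcon
            push_neg at hcon
            rcases lt_or_gt_of_ne hw_i' with hlt | hgt
            · exact hpair _ _ (by omega) hlt (by omega) (by omega) ⟨hcon, hbg⟩
            · exact hpair _ _ (by omega) hgt (by omega) (by omega) ⟨hbg, hcon⟩
          have h1 := hsum_big (i+1+js) js hjsmem hoth
          have hii'cast : ((i+1+js:ℕ):ℤ) - (js:ℤ) = ((i+1:ℕ):ℤ) := by push_cast; ring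
          rw [hii'cast] at h1
          have h2 : YX (i+1+js) ≤ a * G (min (k+q) n) := by
            have h5 := le_SM (Y := YX) ha
              (Finset.mem_range.2 (show (i+1+js) - 1 < min (k+q) n by
                have : js ≤ q := Nat.lt_succ_iff.1 (Finset.mem_range.1 hjsmem)
                omega))
            rwa [show ((i+1+js) - 1) + 1 = i+1+js by omega] at h5
          have h3 : φ js * Zv ((i+1:ℕ):ℤ) ≤ YX (i+1+js) + (q:ℝ)*Φ*T := by
            have := (abs_le.1 h1).1
            linarith
          have h7 : Ywt (i+1) = φ js * Zv ((i+1:ℕ):ℤ) := by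
            rw [hYwtdef]
            simp only
            rw [wt, if_neg (by linarith), if_pos hzneg, hφjs, abs_of_neg hzneg]
            ring
          rw [h7, hkey]
          linarith
      · rw [hzzero, abs_zero] at hbg
        exact absurd hbg (not_lt.2 hT.le)
      · -- positive case
        by_cases hφp' : phiPlusFin q φ ≤ 0
        · have hz0 : phiPlusFin q φ = 0 := le_antisymm hφp' hφp0
          have : Ywt (i+1) = 0 := by
            rw [hYwtdef]
            simp only
            rw [wt, if_pos hzpos, hz0, mul_zero]
          rw [this, hkey]
          linarith
        · push_neg at hφp'
          obtain ⟨js, hjsmem, hjseq⟩ := Finset.exists_mem_eq_sup'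
            (Finset.nonempty_range_iff.mpr (Nat.succ_ne_zero q)) (fun j => max (φ j) 0)
          have hjseq' : phiPlusFin q φ = max (φ js) 0 := hjseq
          have hφjs : φ js = phiPlusFin q φ := by
            rcases le_or_gt (φ js) 0 with h | h
            · rw [hjseq', max_eq_right h] at hφp'
              exact absurd hφp' (lt_irrefl 0)
            · rw [hjseq', max_eq_left h.le]
          have hjsq : (js:ℤ) ≤ q := by
            exact_mod_cast Nat.lt_succ_iff.1 (Finset.mem_range.1 hjsmem)
          have hjs0 : (0:ℤ) ≤ (js:ℤ) := Int.natCast_nonneg js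
          have hi''n : i + 1 + js ≤ n := by
            have : ((i+1+js:ℕ):ℤ) = ((i+1:ℕ):ℤ) + js := by push_cast; ring
            omega
          have hoth : ∀ j ∈ Finset.range (q+1), j ≠ js →
              |Zv (((i+1+js:ℕ):ℤ) - j)| ≤ T := by
            intro j hjmem hne
            have hjq : (j:ℤ) ≤ q := by
              exact_mod_cast Nat.lt_succ_iff.1 (Finset.mem_range.1 hjmem)
            have hj0' : (0:ℤ) ≤ (j:ℤ) := Int.natCast_nonneg j
            have hcastw : ((i+1+js:ℕ):ℤ) = ((i+1:ℕ):ℤ) + js := by push_cast; ring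
            have hne2 : (j:ℤ) ≠ (js:ℤ) := fun hc => hne (by exact_mod_cast hc)
            have hw_i' : ((i+1+js:ℕ):ℤ) - j ≠ ((i+1:ℕ):ℤ) := by omega
            by_contra hcon
            push_neg at hcon
            rcases lt_or_gt_of_ne hw_i' with hlt | hgt
            · exact hpair _ _ (by omega) hlt (by omega) (by omega) ⟨hcon, hbg⟩
            · exact hpair _ _ (by omega) hgt (by omega) (by omega) ⟨hbg, hcon⟩
          have h1 := hsum_big (i+1+js) js hjsmem hoth
          have hii'cast : ((i+1+js:ℕ):ℤ) - (js:ℤ) = ((i+1:ℕ):ℤ) := by push_cast; ring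
          rw [hii'cast] at h1
          have h2 : YX (i+1+js) ≤ a * G (min (k+q) n) := by
            have h5 := le_SM (Y := YX) ha
              (Finset.mem_range.2 (show (i+1+js) - 1 < min (k+q) n by
                have : js ≤ q := Nat.lt_succ_iff.1 (Finset.mem_range.1 hjsmem)
                omega))
            rwa [show ((i+1+js) - 1) + 1 = i+1+js by omega] at h5
          have h3 : φ js * Zv ((i+1:ℕ):ℤ) ≤ YX (i+1+js) + (q:ℝ)*Φ*T := by
            have := (abs_le.1 h1).1
            linarith
          have h7 : Ywt (i+1) = φ js * Zv ((i+1:ℕ):ℤ) := by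
            rw [hYwtdef]
            simp only
            rw [wt, if_pos hzpos, hφjs, abs_of_pos hzpos]
            ring
          rw [h7, hkey]
          linarith
  exact dM2_step_le hn q F G C hC0 SM_zero SM_zero
    (fun i i' h1 _ => SM_mono_of_nonneg ha hYwtnn h1)
    (fun i i' h1 h2 _ => SM_mono1 ha h1 h2)
    hGF hFG hGlbC

end Heart
end Aux10

/-- For the finite order moving average `Xᵢ = Σ_{j=0}^q φⱼ Z_{i-j}`,
the maxima process `Wₙ` and its i.i.d. approximation `Wₙ^Z` are close in the `M₂` metric:
`P(d_{M₂}(Wₙ^Z, Wₙ) > δ) → 0` for every `δ > 0`. -/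
theorem max_process_M2_approximation
    {Ω : Type} [MeasurableSpace Ω] (P : Measure Ω) [IsProbabilityMeasure P]
    (Z : ℤ → Ω → ℝ) (α : ℝ) (hα : 0 < α) (hα2 : α < 2)
    (hiid : IID P Z) (hrv : RegVarAbs P (Z 0) α)
    (a : ℕ → ℝ) (ha : NormSeq P (Z 0) a)
    (q : ℕ) (φ : ℕ → ℝ)
    (β : ℝ) (hβdef : β = ∑ i ∈ Finset.range (q+1), φ i) (hβ : 0 < β)
    (hcoef : ∀ s : ℕ, s ≤ q → 0 ≤ (∑ i ∈ Finset.range (s+1), φ i) / β ∧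
      (∑ i ∈ Finset.range (s+1), φ i) / β ≤ 1)
    (δ : ℝ) (hδ : 0 < δ) :
    Filter.Tendsto
      (fun n => P {ω | δ < dM2
        (fun t => maxProc (a n)
          (fun i => wt (phiPlusFin q φ) (phiMinusFin q φ) (Z (i : ℤ) ω)) n t)
        (fun t => maxProc (a n)
          (fun i => ∑ j ∈ Finset.range (q+1), φ j * Z ((i : ℤ) - j) ω) n t)})
      atTop (𝓝 0) := by
  classical
  obtain ⟨hmeasZ, hindep, hidentZ⟩ := hiid
  obtain ⟨hapos, hna⟩ := ha
  set Φ := (Finset.range (q+1)).sup'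
      (Finset.nonempty_range_iff.mpr (Nat.succ_ne_zero q)) (fun j => |φ j|) with hΦdef
  have hΦ0 : 0 ≤ Φ := le_trans (abs_nonneg (φ 0))
    (Finset.le_sup' (fun j => |φ j|) (Finset.mem_range.2 (Nat.succ_pos q)))
  have hden : (0:ℝ) < ((q:ℝ)+1) * Φ + 1 := by nlinarith [Nat.cast_nonneg (α := ℝ) q]
  set ε := δ / (2 * (((q:ℝ)+1) * Φ + 1)) with hεdef
  have hε : 0 < ε := by rw [hεdef]; positivity
  have hCeq : (((q:ℝ)+1) * Φ + 1) * ε = δ/2 := by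
    rw [hεdef]
    field_simp
  -- events
  have hSmeas : ∀ c : ℝ, MeasurableSet {x : ℝ | c < |x|} :=
    fun c => measurableSet_lt measurable_const measurable_id.abs
  have hTpos : ∀ n : ℕ, 0 < ε * a n := fun n => mul_pos hε (hapos n)
  have hBmeas : ∀ (n : ℕ) (i : ℤ), MeasurableSet {ω | ε * a n < |Z i ω|} :=
    fun n i => (hmeasZ i) (hSmeas (ε * a n))
  have hBident : ∀ (n : ℕ) (i : ℤ), P {ω | ε * a n < |Z i ω|} = P {ω | ε * a n < |Z 0 ω|} := by
    intro n i
    calc P {ω | ε * a n < |Z i ω|} = P.map (Z i) {x | ε * a n < |x|} :=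
          (Measure.map_apply (hmeasZ i) (hSmeas _)).symm
      _ = P.map (Z 0) {x | ε * a n < |x|} := by rw [hidentZ i 0]
      _ = P {ω | ε * a n < |Z 0 ω|} := Measure.map_apply (hmeasZ 0) (hSmeas _)
  have hBindep : ∀ (n : ℕ) (i j : ℤ), i ≠ j →
      P ({ω | ε * a n < |Z i ω|} ∩ {ω | ε * a n < |Z j ω|})
        = P {ω | ε * a n < |Z i ω|} * P {ω | ε * a n < |Z j ω|} := by
    intro n i j hij
    exact (hindep.indepFun hij).measure_inter_preimage_eq_mul _ _ (hSmeas _) (hSmeas _)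
  set pairs : ℕ → Finset (ℤ×ℤ) := fun n =>
    ((Finset.Icc (1-(q:ℤ)) (n:ℤ)) ×ˢ (Finset.Icc (1-(q:ℤ)) (n:ℤ))).filter
      (fun p => p.1 < p.2 ∧ p.2 ≤ p.1 + q) with hpairsdef
  set edge : ℕ → Finset ℤ :=
    fun n => Finset.Icc (1-(q:ℤ)) 0 ∪ Finset.Ioc ((n:ℤ)-(q:ℤ)) (n:ℤ) with hedgedef
  set X1 : Ω → ℝ := fun ω => ∑ j ∈ Finset.range (q+1), φ j * Z (1-(j:ℤ)) ω with hX1def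
  set Bad : ℕ → Set Ω := fun n =>
    (⋃ p ∈ pairs n, {ω | ε * a n < |Z p.1 ω|} ∩ {ω | ε * a n < |Z p.2 ω|}) ∪
    ((⋃ i ∈ edge n, {ω | ε * a n < |Z i ω|}) ∪ {ω | X1 ω < -(ε * a n)}) with hBaddef
  -- inclusion of the target event in Bad n
  have hsub : ∀ n : ℕ, 1 ≤ n → ((q:ℝ)+2)/(n:ℝ) ≤ δ →
      {ω | δ < dM2
        (fun t => maxProc (a n)
          (fun i => wt (phiPlusFin q φ) (phiMinusFin q φ) (Z (i : ℤ) ω)) n t)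
        (fun t => maxProc (a n)
          (fun i => ∑ j ∈ Finset.range (q+1), φ j * Z ((i : ℤ) - j) ω) n t)} ⊆ Bad n := by
    intro n hn1 hn2 ω hω
    by_contra hcon
    rw [hBaddef] at hcon
    simp only [Set.mem_union, not_or] at hcon
    obtain ⟨h1, h2, h3⟩ := hcon
    have h1' : ∀ p ∈ pairs n, ¬(ω ∈ {ω | ε * a n < |Z p.1 ω|} ∩ {ω | ε * a n < |Z p.2 ω|}) := by
      intro p hp hmem
      exact h1 (Set.mem_iUnion₂.2 ⟨p, hp, hmem⟩)
    have h2' : ∀ i ∈ edge n, ¬(ε * a n < |Z i ω|) := by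
      intro i hi hmem
      exact h2 (Set.mem_iUnion₂.2 ⟨i, hi, hmem⟩)
    have h3' : -(ε * a n) ≤ X1 ω := not_lt.1 h3
    have hheart := event_dM2_bound q φ n hn1 (a n) (ε * a n) (hapos n) (hTpos n)
      (fun i => Z i ω) ?_ ?_ ?_ ?_
    rotate_left
    · -- pairs hypothesis
      intro i j hi hij hjn hjq ⟨hbi, hbj⟩
      refine h1' (i, j) ?_ ⟨hbi, hbj⟩
      simp only [hpairsdef]
      refine Finset.mem_filter.2 ⟨Finset.mem_product.2 ⟨?_, ?_⟩, hij, hjq⟩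
      · exact Finset.mem_Icc.2 ⟨hi, by omega⟩
      · exact Finset.mem_Icc.2 ⟨by omega, hjn⟩
    · -- left edge
      intro i hi1 hi2
      apply not_lt.1
      apply h2' i
      simp only [hedgedef]
      exact Finset.mem_union_left _ (Finset.mem_Icc.2 ⟨hi1, hi2⟩)
    · -- right edge
      intro i hi1 hi2
      apply not_lt.1
      apply h2' i
      simp only [hedgedef]
      exact Finset.mem_union_right _ (Finset.mem_Ioc.2 ⟨hi1, hi2⟩)
    · -- X1
      exact h3'
    rw [← hΦdef] at hheart
    have hTa : ε * a n / a n = ε := mul_div_cancel_right₀ _ (ne_of_gt (hapos n))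
    rw [hTa, hCeq] at hheart
    have hfin : dM2
        (fun t => SM (a n) (fun i => wt (phiPlusFin q φ) (phiMinusFin q φ) (Z (i:ℤ) ω)) ⌊(n:ℝ)*t⌋₊)
        (fun t => SM (a n) (fun i => ∑ j ∈ Finset.range (q+1), φ j * Z ((i:ℤ) - (j:ℤ)) ω) ⌊(n:ℝ)*t⌋₊)
        ≤ δ := le_trans hheart (max_le (by linarith) hn2)
    exact absurd hω (not_lt.2 hfin)
  -- probability bound
  have hcard_pairs : ∀ n : ℕ, (pairs n).card ≤ (n+q)*q := by
    intro n
    have hmap : ∀ p ∈ pairs n,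
        (p.1, p.2 - p.1) ∈ (Finset.Icc (1-(q:ℤ)) (n:ℤ)) ×ˢ (Finset.Icc (1:ℤ) (q:ℤ)) := by
      intro p hp
      simp only [hpairsdef, Finset.mem_filter, Finset.mem_product] at hp
      obtain ⟨⟨hp1, _⟩, hlt, hle⟩ := hp
      exact Finset.mem_product.2 ⟨hp1, Finset.mem_Icc.2 ⟨by omega, by omega⟩⟩
    have hinj : Set.InjOn (fun p : ℤ×ℤ => (p.1, p.2 - p.1)) (pairs n) := by
      intro p _ p' _ hpp
      simp only [Prod.mk.injEq] at hpp
      obtain ⟨e1, e2⟩ := hpp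
      exact Prod.ext e1 (by omega)
    calc (pairs n).card ≤ ((Finset.Icc (1-(q:ℤ)) (n:ℤ)) ×ˢ (Finset.Icc (1:ℤ) (q:ℤ))).card :=
          Finset.card_le_card_of_injOn _ hmap hinj
      _ = (n+q)*q := by
          rw [Finset.card_product, Int.card_Icc, Int.card_Icc]
          have e1 : ((n:ℤ)+1-(1-(q:ℤ))).toNat = n+q := by omega
          have e2 : ((q:ℤ)+1-1).toNat = q := by omega
          rw [e1, e2]
  have hcard_edge : ∀ n : ℕ, (edge n).card ≤ 2*q := by
    intro n
    simp only [hedgedef]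
    calc (Finset.Icc (1-(q:ℤ)) 0 ∪ Finset.Ioc ((n:ℤ)-(q:ℤ)) (n:ℤ)).card
        ≤ (Finset.Icc (1-(q:ℤ)) 0).card + (Finset.Ioc ((n:ℤ)-(q:ℤ)) (n:ℤ)).card :=
          Finset.card_union_le _ _
      _ ≤ 2*q := by
          rw [Int.card_Icc, Int.card_Ioc]
          omega
  have hPBad : ∀ n : ℕ, P (Bad n) ≤
      (((n+q)*q : ℕ) : ℝ≥0∞) * P {ω | ε * a n < |Z 0 ω|}^2
      + ((2*q : ℕ) : ℝ≥0∞) * P {ω | ε * a n < |Z 0 ω|}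
      + P {ω | X1 ω < -(ε * a n)} := by
    intro n
    have hA : P (⋃ p ∈ pairs n, {ω | ε * a n < |Z p.1 ω|} ∩ {ω | ε * a n < |Z p.2 ω|})
        ≤ (((n+q)*q : ℕ) : ℝ≥0∞) * P {ω | ε * a n < |Z 0 ω|}^2 := by
      calc P (⋃ p ∈ pairs n, {ω | ε * a n < |Z p.1 ω|} ∩ {ω | ε * a n < |Z p.2 ω|})
          ≤ ∑ p ∈ pairs n, P ({ω | ε * a n < |Z p.1 ω|} ∩ {ω | ε * a n < |Z p.2 ω|}) :=
            measure_biUnion_finset_le _ _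
        _ = ∑ _p ∈ pairs n, P {ω | ε * a n < |Z 0 ω|}^2 := by
            apply Finset.sum_congr rfl
            intro p hp
            have hne : p.1 ≠ p.2 := by
              simp only [hpairsdef, Finset.mem_filter] at hp
              exact ne_of_lt hp.2.1
            rw [hBindep n p.1 p.2 hne, hBident n p.1, hBident n p.2, sq]
        _ = ((pairs n).card : ℝ≥0∞) * P {ω | ε * a n < |Z 0 ω|}^2 := by
            rw [Finset.sum_const, nsmul_eq_mul]
        _ ≤ (((n+q)*q : ℕ) : ℝ≥0∞) * P {ω | ε * a n < |Z 0 ω|}^2 := by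
            apply mul_le_mul_left
            exact_mod_cast Nat.cast_le.2 (hcard_pairs n)
    have hB : P (⋃ i ∈ edge n, {ω | ε * a n < |Z i ω|})
        ≤ ((2*q : ℕ) : ℝ≥0∞) * P {ω | ε * a n < |Z 0 ω|} := by
      calc P (⋃ i ∈ edge n, {ω | ε * a n < |Z i ω|})
          ≤ ∑ i ∈ edge n, P {ω | ε * a n < |Z i ω|} := measure_biUnion_finset_le _ _
        _ = ∑ _i ∈ edge n, P {ω | ε * a n < |Z 0 ω|} := by
            apply Finset.sum_congr rfl
            intro i _
            exact hBident n i
        _ = ((edge n).card : ℝ≥0∞) * P {ω | ε * a n < |Z 0 ω|} := by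
            rw [Finset.sum_const, nsmul_eq_mul]
        _ ≤ ((2*q : ℕ) : ℝ≥0∞) * P {ω | ε * a n < |Z 0 ω|} := by
            apply mul_le_mul_left
            exact_mod_cast Nat.cast_le.2 (hcard_edge n)
    calc P (Bad n) ≤ P (⋃ p ∈ pairs n, {ω | ε * a n < |Z p.1 ω|} ∩ {ω | ε * a n < |Z p.2 ω|})
          + P ((⋃ i ∈ edge n, {ω | ε * a n < |Z i ω|}) ∪ {ω | X1 ω < -(ε * a n)}) := by
          simp only [hBaddef]
          exact measure_union_le _ _
      _ ≤ P (⋃ p ∈ pairs n, {ω | ε * a n < |Z p.1 ω|} ∩ {ω | ε * a n < |Z p.2 ω|})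
          + (P (⋃ i ∈ edge n, {ω | ε * a n < |Z i ω|}) + P {ω | X1 ω < -(ε * a n)}) :=
          add_le_add_right (measure_union_le _ _) _
      _ ≤ _ := by
          rw [add_assoc]
          exact add_le_add hA (add_le_add hB (le_refl _))
  -- convergence of the bound
  have hnp : Filter.Tendsto
      (fun n : ℕ => (n:ℝ) * (P {ω | ε * a n < |Z 0 ω|}).toReal) atTop (𝓝 (ε ^ (-α))) :=
    tail_scale P (Z 0) a hrv ⟨hapos, hna⟩ hε
  have hp0 : Filter.Tendsto (fun n : ℕ => (P {ω | ε * a n < |Z 0 ω|}).toReal) atTop (𝓝 0) :=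
    tendsto_zero_of_mul_tendsto hnp
  have hp_eq : ∀ n : ℕ, P {ω | ε * a n < |Z 0 ω|}
      = ENNReal.ofReal ((P {ω | ε * a n < |Z 0 ω|}).toReal) :=
    fun n => (ENNReal.ofReal_toReal (measure_ne_top P _)).symm
  have hterm2 : Filter.Tendsto
      (fun n : ℕ => ((2*q : ℕ) : ℝ≥0∞) * P {ω | ε * a n < |Z 0 ω|}) atTop (𝓝 0) := by
    have h1 : Filter.Tendsto (fun n : ℕ => P {ω | ε * a n < |Z 0 ω|}) atTop (𝓝 0) := by
      have := ENNReal.tendsto_ofReal (f := Filter.atTop) hp0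
      rw [ENNReal.ofReal_zero] at this
      exact this.congr (fun n => (hp_eq n).symm)
    have h2 := ENNReal.Tendsto.const_mul h1 (Or.inr (ENNReal.natCast_ne_top (2*q)))
    rwa [mul_zero] at h2
  have hterm1 : Filter.Tendsto
      (fun n : ℕ => (((n+q)*q : ℕ) : ℝ≥0∞) * P {ω | ε * a n < |Z 0 ω|}^2) atTop (𝓝 0) := by
    have hreal : Filter.Tendsto
        (fun n : ℕ => (((n+q)*q : ℕ) : ℝ) * (P {ω | ε * a n < |Z 0 ω|}).toReal^2)
        atTop (𝓝 0) := by
      have hA : Filter.Tendsto (fun n : ℕ => ((q:ℝ) * (1/(n:ℝ)) + (q:ℝ)^2 * (1/(n:ℝ))^2))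
          atTop (𝓝 ((q:ℝ) * 0 + (q:ℝ)^2 * 0^2)) := by
        apply Filter.Tendsto.add
        · exact tendsto_const_nhds.mul tendsto_one_div_atTop_nhds_zero_nat
        · exact tendsto_const_nhds.mul (tendsto_one_div_atTop_nhds_zero_nat.pow 2)
      have hA' : Filter.Tendsto (fun n : ℕ => ((q:ℝ) * (1/(n:ℝ)) + (q:ℝ)^2 * (1/(n:ℝ))^2))
          atTop (𝓝 0) := by
        have : (q:ℝ) * 0 + (q:ℝ)^2 * 0^2 = 0 := by ring
        rwa [this] at hA
      have hB : Filter.Tendsto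
          (fun n : ℕ => ((n:ℝ) * (P {ω | ε * a n < |Z 0 ω|}).toReal)^2)
          atTop (𝓝 ((ε ^ (-α))^2)) := hnp.pow 2
      have hC := hA'.mul hB
      rw [zero_mul] at hC
      apply hC.congr'
      filter_upwards [Filter.eventually_ge_atTop 1] with n hn
      have hnne : (n:ℝ) ≠ 0 := by positivity
      push_cast
      field_simp
    have heq : ∀ n : ℕ, (((n+q)*q : ℕ) : ℝ≥0∞) * P {ω | ε * a n < |Z 0 ω|}^2
        = ENNReal.ofReal ((((n+q)*q : ℕ) : ℝ) * (P {ω | ε * a n < |Z 0 ω|}).toReal^2) := by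
      intro n
      rw [ENNReal.ofReal_mul (by positivity), ENNReal.ofReal_pow ENNReal.toReal_nonneg,
        ENNReal.ofReal_natCast, ← hp_eq n]
    have := ENNReal.tendsto_ofReal (f := Filter.atTop) hreal
    rw [ENNReal.ofReal_zero] at this
    exact this.congr (fun n => (heq n).symm)
  have hX1meas : Measurable X1 := by
    rw [hX1def]
    exact Finset.measurable_sum _ (fun j _ => (hmeasZ _).const_mul (φ j))
  have hTtop : Filter.Tendsto (fun n : ℕ => ε * a n) atTop atTop :=
    (norm_seq_tendsto_atTop P (Z 0) a hrv ⟨hapos, hna⟩).const_mul_atTop hε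
  have hterm3 : Filter.Tendsto (fun n : ℕ => P {ω | X1 ω < -(ε * a n)}) atTop (𝓝 0) :=
    tendsto_prob_lt_neg_atTop P hX1meas hTtop
  have hbound : Filter.Tendsto (fun n : ℕ =>
      (((n+q)*q : ℕ) : ℝ≥0∞) * P {ω | ε * a n < |Z 0 ω|}^2
      + ((2*q : ℕ) : ℝ≥0∞) * P {ω | ε * a n < |Z 0 ω|}
      + P {ω | X1 ω < -(ε * a n)}) atTop (𝓝 0) := by
    have := (hterm1.add hterm2).add hterm3
    simpa using this
  -- final squeeze
  apply tendsto_of_tendsto_of_tendsto_of_le_of_le' tendsto_const_nhds hbound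
  · exact Filter.Eventually.of_forall fun n => zero_le
  · have hq2 : Filter.Tendsto (fun n : ℕ => ((q:ℝ)+2)/(n:ℝ)) atTop (𝓝 0) :=
      tendsto_const_div_atTop_nhds_zero_nat _
    filter_upwards [Filter.eventually_ge_atTop 1, hq2.eventually_le_const hδ] with n hn1 hn2
    exact le_trans (measure_mono (hsub n hn1 hn2)) (hPBad n)

end LinProc
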